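/- arXiv:2311.06458 — 4 statements merged into one kernel-verified Lean document; each statement's English description precedes it below -/
import Mathlib

section
/- Let X, Y, Z, and S be pairwise disjoint node sets in an MPDAG G with Z ∩ PossDe(X,G) = ∅. Then S satisfies the conditional adjustment criterion relative to (X,Y,Z) in G if and only if S ∪ Z satisfies the adjustment criterion relative to (X,Y) in G. -/
open MeasureTheory
open scoped ENNReal

namespace CondAdj

/-- Edge marks of a (partial) mixed graph.  `Mark.none` means "no edge". -/
inductive Mark : Type
  | none
  | tail
  | arrow
  | circle
  deriving DecidableEq

/-- A marked graph on node type `V`:  `m a b` is the edge mark at `b` of the edge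
between `a` and `b` (`Mark.none` iff `a` and `b` are not adjacent).
A directed edge `a → b` has a tail at `a` and an arrowhead at `b`;
an undirected edge `a − b` (resp. `a ∘-∘ b`) has tails (resp. circles) at both ends;
a bidirected edge `a ↔ b` has arrowheads at both ends. -/
structure MG (V : Type) where
  m : V → V → Mark
  none_symm : ∀ a b, m a b = Mark.none ↔ m b a = Mark.none
  irrefl : ∀ a, m a a = Mark.none

namespace MG

variable {V : Type}

/-- `a` and `b` are adjacent. -/
def Adj (G : MG V) (a b : V) : Prop := G.m a b ≠ Mark.none

/-- Directed edge `a → b`. -/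
def DirE (G : MG V) (a b : V) : Prop := G.m a b = Mark.arrow ∧ G.m b a = Mark.tail

/-- Bidirected edge `a ↔ b`. -/
def BidirE (G : MG V) (a b : V) : Prop := G.m a b = Mark.arrow ∧ G.m b a = Mark.arrow

/-- Undirected edge (`a − b` or `a ∘-∘ b`). -/
def UndirE (G : MG V) (a b : V) : Prop :=
  (G.m a b = Mark.tail ∧ G.m b a = Mark.tail) ∨
    (G.m a b = Mark.circle ∧ G.m b a = Mark.circle)

/-- Edge with an arrowhead at `b` (i.e. `a *→ b`). -/
def IntoE (G : MG V) (a b : V) : Prop := G.m a b = Mark.arrow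

/-- `b` is a descendant of `a` (via a directed path, possibly of length 0). -/
def Desc (G : MG V) (a b : V) : Prop := Relation.ReflTransGen G.DirE a b

/-- Descendants of a set of nodes. -/
def De (G : MG V) (A : Set V) : Set V := {b | ∃ a ∈ A, G.Desc a b}

/-- Ancestors of a set of nodes. -/
def An (G : MG V) (A : Set V) : Set V := {a | ∃ b ∈ A, G.Desc a b}

/-- `p 0, …, p n` is a path in `G` (distinct nodes, consecutive ones adjacent). -/
def IsPath (G : MG V) (p : ℕ → V) (n : ℕ) : Prop :=
  1 ≤ n ∧ (∀ i ≤ n, ∀ j ≤ n, p i = p j → i = j) ∧ ∀ i < n, G.Adj (p i) (p (i + 1))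

/-- A path from `X` to `Y`. -/
def IsPathFromTo (G : MG V) (p : ℕ → V) (n : ℕ) (X Y : Set V) : Prop :=
  G.IsPath p n ∧ p 0 ∈ X ∧ p n ∈ Y

/-- A possibly causal (possibly directed) path: no arrowhead pointing backwards,
i.e. there is no edge `p i ←* p j` for `i < j`. -/
def PossCausal (G : MG V) (p : ℕ → V) (n : ℕ) : Prop :=
  ∀ i j, i < j → j ≤ n → ¬ G.IntoE (p j) (p i)

/-- A causal (directed) path. -/
def Causal (G : MG V) (p : ℕ → V) (n : ℕ) : Prop := ∀ i < n, G.DirE (p i) (p (i + 1))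

/-- The non-endpoint node at position `i` of `p` is a collider. -/
def ColliderAt (G : MG V) (p : ℕ → V) (i : ℕ) : Prop :=
  G.IntoE (p (i - 1)) (p i) ∧ G.IntoE (p (i + 1)) (p i)

/-- The non-endpoint node at position `i` of `p` is a definite non-collider. -/
def DefNonColliderAt (G : MG V) (p : ℕ → V) (i : ℕ) : Prop :=
  G.DirE (p i) (p (i - 1)) ∨ G.DirE (p i) (p (i + 1)) ∨
    (G.UndirE (p (i - 1)) (p i) ∧ G.UndirE (p i) (p (i + 1)) ∧
      ¬ G.Adj (p (i - 1)) (p (i + 1)))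

/-- A definite status path. -/
def DefStatus (G : MG V) (p : ℕ → V) (n : ℕ) : Prop :=
  ∀ i, 1 ≤ i → i < n → G.ColliderAt p i ∨ G.DefNonColliderAt p i

/-- The set `W` blocks the path `p`: some non-collider on `p` is in `W`, or some
collider on `p` has no descendant in `W`. -/
def Blocks (G : MG V) (W : Set V) (p : ℕ → V) (n : ℕ) : Prop :=
  ∃ i, 1 ≤ i ∧ i < n ∧
    ((¬ G.ColliderAt p i ∧ p i ∈ W) ∨
      (G.ColliderAt p i ∧ ∀ d, G.Desc (p i) d → d ∉ W))

/-- Possible descendants (via possibly causal paths; every node is its own). -/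
def PossDe (G : MG V) (A : Set V) : Set V :=
  A ∪ {b | ∃ a ∈ A, ∃ p n, G.IsPath p n ∧ G.PossCausal p n ∧ p 0 = a ∧ p n = b}

/-- Possible ancestors (via possibly causal paths; every node is its own). -/
def PossAn (G : MG V) (A : Set V) : Set V :=
  A ∪ {a | ∃ b ∈ A, ∃ p n, G.IsPath p n ∧ G.PossCausal p n ∧ p 0 = a ∧ p n = b}

end MG

variable {V : Type}

/-- The path `p` is proper w.r.t. `X`: only its first node is in `X`. -/
def Proper (p : ℕ → V) (n : ℕ) (X : Set V) : Prop :=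
  ∀ i, 1 ≤ i → i ≤ n → p i ∉ X

namespace MG

variable {V : Type}

/-- Possible mediators: the nodes other than those in `X` lying on proper possibly
causal paths from `X` to `Y`. -/
def PossMed (G : MG V) (X Y : Set V) : Set V :=
  {w | ∃ p n, G.IsPathFromTo p n X Y ∧ Proper p n X ∧ G.PossCausal p n ∧
      ∃ i, 1 ≤ i ∧ i ≤ n ∧ p i = w}

/-- The forbidden set: possible descendants of the possible mediators. -/
def Forb (G : MG V) (X Y : Set V) : Set V := G.PossDe (G.PossMed X Y)

/-- Mediators: the nodes other than those in `X` lying on proper causal paths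
from `X` to `Y`. -/
def Med (G : MG V) (X Y : Set V) : Set V :=
  {w | ∃ p n, G.IsPathFromTo p n X Y ∧ Proper p n X ∧ G.Causal p n ∧
      ∃ i, 1 ≤ i ∧ i ≤ n ∧ p i = w}

/-- The forbidden set of a DAG: descendants of the mediators. -/
def ForbD (G : MG V) (X Y : Set V) : Set V := G.De (G.Med X Y)

/-- Parents of a node. -/
def Pa (G : MG V) (b : V) : Set V := {a | G.DirE a b}

/-- Parents of a set of nodes:  `(⋃ w ∈ W, Pa w) \ W`. -/
def PaSet (G : MG V) (W : Set V) : Set V := {a | ∃ w ∈ W, G.DirE a w} \ W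

/-- No directed cycles. -/
def Acyclic (G : MG V) : Prop := ∀ a, ¬ Relation.TransGen G.DirE a a

/-- A DAG: all edges directed, no directed cycles. -/
def IsDAG (G : MG V) : Prop :=
  (∀ a b, G.Adj a b → G.DirE a b ∨ G.DirE b a) ∧ G.Acyclic

/-- A partially directed acyclic graph: edges are `→` or `−`, no directed cycles. -/
def IsPDG (G : MG V) : Prop :=
  (∀ a b, G.Adj a b →
      G.DirE a b ∨ G.DirE b a ∨ (G.m a b = Mark.tail ∧ G.m b a = Mark.tail)) ∧
    G.Acyclic

/-- `a → b ← c` is an unshielded collider. -/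
def UnshieldedCollider (G : MG V) (a b c : V) : Prop :=
  G.DirE a b ∧ G.DirE c b ∧ a ≠ c ∧ ¬ G.Adj a c

/-- The class `[G]` of DAGs represented by a partially directed graph `G`: the DAGs
with the same nodes, adjacencies and unshielded colliders as `G` in which every
directed edge of `G` is directed the same way. -/
def rep (G : MG V) : Set (MG V) :=
  {D | D.IsDAG ∧ (∀ a b, D.Adj a b ↔ G.Adj a b) ∧ (∀ a b, G.DirE a b → D.DirE a b) ∧
      ∀ a b c, (D.UnshieldedCollider a b c ↔ G.UnshieldedCollider a b c)}

/-- A maximally oriented PDAG (MPDAG): a PDAG, representing a nonempty class of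
DAGs, whose orientations are complete (every undirected edge is oriented both
ways by DAGs in the represented class). -/
def IsMPDAG (G : MG V) : Prop :=
  G.IsPDG ∧ G.rep.Nonempty ∧
    ∀ a b, G.UndirE a b → (∃ D ∈ G.rep, D.DirE a b) ∧ ∃ D ∈ G.rep, D.DirE b a

end MG

section Density

variable {V : Type} [Fintype V] [DecidableEq V]

/-- Override the coordinates of `v` in `A` by the values `w`. -/
noncomputable def override (v : V → ℝ) (A : Finset V) (w : {x : V // x ∈ A} → ℝ) :
    V → ℝ :=
  fun i => if h : i ∈ A then w ⟨i, h⟩ else v i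

/-- The marginal density of the coordinates in `A` (integrating out `Aᶜ`). -/
noncomputable def marg (f : (V → ℝ) → ℝ≥0∞) (A : Finset V) (v : V → ℝ) : ℝ≥0∞ :=
  ∫⁻ w : {x : V // x ∈ Aᶜ} → ℝ, f (override v Aᶜ w)

/-- The conditional density `f(a | b)` of the coordinates in `A` given those in `B`. -/
noncomputable def condD (f : (V → ℝ) → ℝ≥0∞) (A B : Finset V) (v : V → ℝ) : ℝ≥0∞ :=
  marg f (A ∪ B) v / marg f B v

/-- A (strictly positive) joint density on `V → ℝ`. -/
def IsDensity (f : (V → ℝ) → ℝ≥0∞) : Prop :=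
  Measurable f ∧ (∫⁻ v : V → ℝ, f v) = 1 ∧ ∀ v, f v ≠ 0 ∧ f v ≠ ⊤

/-- A family of interventional densities: `obs` is the observational density
`f(v)`, and `int X x` is the interventional density `f(v | do(X = x))`. -/
structure IntFamily (V : Type) [Fintype V] [DecidableEq V] where
  obs : (V → ℝ) → ℝ≥0∞
  int : Finset V → (V → ℝ) → (V → ℝ) → ℝ≥0∞

-- Parents of a node, as a finset.
open Classical in
noncomputable def paFin (G : MG V) (i : V) : Finset V :=
  Finset.univ.filter fun j => G.DirE j i

-- The family `F` is consistent with the causal DAG `G` (i.e. `G` is a causal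
-- Bayesian network compatible with `F`): every interventional density satisfies
-- the truncated factorization.
open Classical in
def Consistent (F : IntFamily V) (G : MG V) : Prop :=
  (∀ x, F.int ∅ x = F.obs) ∧
    ∀ (X : Finset V) (x v : V → ℝ),
      F.int X x v =
        if ∀ i ∈ X, v i = x i then
          ∏ i ∈ Xᶜ, condD F.obs {i} (paFin G i) v
        else 0

/-- The conditional interventional density `f(a | do(x), z)` (where the value of
the intervention `do(X = x)` is read off from `v`). -/
noncomputable def doCond (F : IntFamily V) (X A Z : Finset V) (v : V → ℝ) : ℝ≥0∞ :=
  marg (F.int X v) (A ∪ Z ∪ X) v / marg (F.int X v) (Z ∪ X) v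

/-- The conditional adjustment functional
`∫ f(y | x, z, s) f(s | z) ds`  (resp. `f(y | x, z)` if `S = ∅`). -/
noncomputable def adjRHS (f : (V → ℝ) → ℝ≥0∞) (X Y Z S : Finset V) (v : V → ℝ) :
    ℝ≥0∞ :=
  if S = ∅ then condD f Y (X ∪ Z) v
  else
    ∫⁻ w : {x : V // x ∈ S} → ℝ,
      condD f Y (X ∪ Z ∪ S) (override v S w) * condD f S Z (override v S w)

/-- `S` is a conditional adjustment set relative to `(X, Y, Z)` in the causal
MPDAG `G`: for every density consistent with `G` (i.e. with every DAG in `[G]`),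
`f(y | do(x), z)` is given by the conditional adjustment functional. -/
def CondAdjSet (G : MG V) (X Y Z S : Finset V) : Prop :=
  ∀ F : IntFamily V, IsDensity F.obs → (∀ D ∈ G.rep, Consistent F D) →
    ∀ v : V → ℝ, doCond F X Y Z v = adjRHS F.obs X Y Z S v

/-- `S` is a conditional adjustment set relative to `(X, Y, Z)` in the causal DAG `D`. -/
def CondAdjSetDAG (D : MG V) (X Y Z S : Finset V) : Prop :=
  ∀ F : IntFamily V, IsDensity F.obs → Consistent F D →
    ∀ v : V → ℝ, doCond F X Y Z v = adjRHS F.obs X Y Z S v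

/-- `W` is an (unconditional) adjustment set relative to `(X, Y)` in the causal MPDAG `G`. -/
def AdjSet (G : MG V) (X Y W : Finset V) : Prop :=
  ∀ F : IntFamily V, IsDensity F.obs → (∀ D ∈ G.rep, Consistent F D) →
    ∀ v : V → ℝ, doCond F X Y ∅ v = adjRHS F.obs X Y ∅ W v

end Density

section Criteria

variable {V : Type}

/-- Every proper possibly causal path from `X` to `Y` in `G` starts with a
directed edge out of `X`. -/
def StartsDirected (G : MG V) (X Y : Set V) : Prop :=
  ∀ p n, G.IsPathFromTo p n X Y → Proper p n X → G.PossCausal p n → G.DirE (p 0) (p 1)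

/-- `W` blocks all proper non-causal definite status paths from `X` to `Y` in `G`. -/
def BlocksNonCausal (G : MG V) (X Y W : Set V) : Prop :=
  ∀ p n, G.IsPathFromTo p n X Y → Proper p n X → ¬ G.PossCausal p n →
    G.DefStatus p n → G.Blocks W p n

/-- The conditional adjustment criterion relative to `(X, Y, Z)` in an MPDAG. -/
def CondAdjCrit (G : MG V) (X Y Z S : Set V) : Prop :=
  StartsDirected G X Y ∧ S ∩ G.Forb X Y = ∅ ∧ BlocksNonCausal G X Y (S ∪ Z)

/-- The (unconditional) adjustment criterion relative to `(X, Y)` in an MPDAG. -/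
def AdjCrit (G : MG V) (X Y W : Set V) : Prop :=
  StartsDirected G X Y ∧ W ∩ G.Forb X Y = ∅ ∧ BlocksNonCausal G X Y W

/-- `W` blocks all proper non-causal paths from `X` to `Y` in a DAG. -/
def BlocksNonCausalD (G : MG V) (X Y W : Set V) : Prop :=
  ∀ p n, G.IsPathFromTo p n X Y → Proper p n X → ¬ G.Causal p n → G.Blocks W p n

/-- The conditional adjustment criterion relative to `(X, Y, Z)` in a DAG. -/
def CondAdjCritDAG (G : MG V) (X Y Z S : Set V) : Prop :=
  S ∩ G.ForbD X Y = ∅ ∧ BlocksNonCausalD G X Y (S ∪ Z)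

end Criteria

/-- A set, regarded as a finset (the node type is finite). -/
noncomputable def setFin {V : Type} [Fintype V] (s : Set V) : Finset V :=
  s.toFinite.toFinset

end CondAdj

theorem test_dummy : True := trivial

namespace CondAdjProof
open CondAdj CondAdj.MG

variable {V : Type} {G : CondAdj.MG V}

/-- `t` reaches `w` via a possibly causal path (or equals `w`). -/
def Reach (G : CondAdj.MG V) (w t : V) : Prop :=
  t = w ∨ ∃ q l, G.IsPath q l ∧ G.PossCausal q l ∧ q 0 = t ∧ q l = w

lemma dirE_ne {a b : V} (h : G.DirE a b) : a ≠ b := by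
  intro e
  subst e
  have h1 := h.1
  rw [G.irrefl a] at h1
  exact absurd h1 (by decide)

lemma not_dirE_rev {a b : V} (h : G.DirE a b) : ¬ G.DirE b a := by
  intro h2
  have h1 := h.1
  rw [h2.2] at h1
  exact absurd h1 (by decide)

lemma adj_of_dirE {a b : V} (h : G.DirE a b) : G.Adj a b := by
  intro hn
  have h1 := h.1
  rw [hn] at h1
  exact absurd h1 (by decide)

lemma adj_of_und {a b : V} (h : G.m a b = CondAdj.Mark.tail ∧ G.m b a = CondAdj.Mark.tail) :
    G.Adj a b := by
  intro hn
  have h1 := h.1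
  rw [hn] at h1
  exact absurd h1 (by decide)

lemma pdg_cases (hG : G.IsMPDAG) {a b : V} (h : G.Adj a b) :
    G.DirE a b ∨ G.DirE b a ∨
      (G.m a b = CondAdj.Mark.tail ∧ G.m b a = CondAdj.Mark.tail) :=
  hG.1.1 a b h

lemma acy (hG : G.IsMPDAG) : G.Acyclic := hG.1.2

lemma intoE_dirE (hG : G.IsMPDAG) {a b : V} (h : G.IntoE a b) : G.DirE a b := by
  have hadj : G.Adj a b := by
    intro hn
    have h1 : G.m a b = CondAdj.Mark.arrow := h
    rw [hn] at h1
    exact absurd h1 (by decide)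
  rcases pdg_cases hG hadj with h1 | h1 | h1
  · exact h1
  · have h2 : G.m a b = CondAdj.Mark.arrow := h
    rw [h1.2] at h2
    exact absurd h2 (by decide)
  · have h2 : G.m a b = CondAdj.Mark.arrow := h
    rw [h1.1] at h2
    exact absurd h2 (by decide)

/-- On a possibly causal path every edge is directed forward or undirected. -/
lemma pc_edge (hG : G.IsMPDAG) {p : ℕ → V} {n : ℕ} (hp : G.IsPath p n)
    (hpc : G.PossCausal p n) {j : ℕ} (hj : j + 1 ≤ n) :
    G.DirE (p j) (p (j + 1)) ∨
      (G.m (p j) (p (j + 1)) = CondAdj.Mark.tail ∧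
        G.m (p (j + 1)) (p j) = CondAdj.Mark.tail) := by
  have hadj := hp.2.2 j (by omega)
  rcases pdg_cases hG hadj with h | h | h
  · exact Or.inl h
  · exact absurd h.1 (hpc j (j + 1) (by omega) hj)
  · exact Or.inr h

lemma rep_dirE {D : CondAdj.MG V} (hD : D ∈ G.rep) {a b : V} (h : G.DirE a b) :
    D.DirE a b := hD.2.2.1 a b h

lemma rep_tg {D : CondAdj.MG V} (hD : D ∈ G.rep) {a b : V}
    (h : Relation.TransGen G.DirE a b) : Relation.TransGen D.DirE a b := by
  induction h with
  | single h1 => exact Relation.TransGen.single (rep_dirE hD h1)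
  | tail _ h2 ih => exact ih.tail (rep_dirE hD h2)

lemma orient_und (hG : G.IsMPDAG) {a b : V}
    (h : G.m a b = CondAdj.Mark.tail ∧ G.m b a = CondAdj.Mark.tail) :
    (∃ D ∈ G.rep, D.DirE a b) ∧ ∃ D ∈ G.rep, D.DirE b a :=
  hG.2.2 a b (Or.inl h)

/-- Meek-rule style consequence: if `a → b` and `b − c` (with `a ≠ c`) then `a`
and `c` are adjacent and there is no edge `c → a`. -/
lemma m1 (hG : G.IsMPDAG) {a b c : V} (hab : G.DirE a b)
    (hbc : G.m b c = CondAdj.Mark.tail ∧ G.m c b = CondAdj.Mark.tail) (hac : a ≠ c) :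
    G.Adj a c ∧ ¬ G.DirE c a := by
  constructor
  · by_contra hna
    obtain ⟨D, hD, hcb⟩ := (orient_und hG hbc).2
    have hDuc : D.UnshieldedCollider a b c :=
      ⟨rep_dirE hD hab, hcb, hac, fun h => hna ((hD.2.1 a c).1 h)⟩
    have hGuc := (hD.2.2.2 a b c).1 hDuc
    have h1 := hGuc.2.1.1
    rw [hbc.2] at h1
    exact absurd h1 (by decide)
  · intro hca
    obtain ⟨D, hD, hbc'⟩ := (orient_und hG hbc).1
    have hcyc : Relation.TransGen D.DirE a a :=
      ((Relation.TransGen.single (rep_dirE hD hab)).tail hbc').tail (rep_dirE hD hca)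
    exact hD.1.2 a hcyc

/-- From `a → c` and `c − d` we get `a → d` or `a − d`. -/
lemma m1_tri (hG : G.IsMPDAG) {a c d : V} (h' : G.DirE a c)
    (hcd : G.m c d = CondAdj.Mark.tail ∧ G.m d c = CondAdj.Mark.tail) :
    G.DirE a d ∨ (G.m a d = CondAdj.Mark.tail ∧ G.m d a = CondAdj.Mark.tail) := by
  have hne : a ≠ d := by
    intro e
    subst e
    have h1 := h'.1
    rw [hcd.2] at h1
    exact absurd h1 (by decide)
  obtain ⟨hadj, hnd⟩ := m1 hG h' hcd hne
  rcases pdg_cases hG hadj with h | h | h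
  · exact Or.inl h
  · exact absurd h hnd
  · exact Or.inr h

/-- `m1` extended along a directed path. -/
lemma m1_star (hG : G.IsMPDAG) {a b d : V} (h : Relation.TransGen G.DirE a b)
    (hbd : G.m b d = CondAdj.Mark.tail ∧ G.m d b = CondAdj.Mark.tail) :
    Relation.TransGen G.DirE a d ∨
      (G.m a d = CondAdj.Mark.tail ∧ G.m d a = CondAdj.Mark.tail) := by
  induction h using Relation.TransGen.head_induction_on with
  | single h1 =>
    rcases m1_tri hG h1 hbd with h2 | h2
    · exact Or.inl (Relation.TransGen.single h2)
    · exact Or.inr h2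
  | head h' _ ih =>
    rcases ih with h2 | h2
    · exact Or.inl (h2.head h')
    · rcases m1_tri hG h' h2 with h3 | h3
      · exact Or.inl (Relation.TransGen.single h3)
      · exact Or.inr h3

lemma chain_tg {r : V → V → Prop} {p : ℕ → V} :
    ∀ {n : ℕ}, 1 ≤ n → (∀ j, j + 1 ≤ n → r (p j) (p (j + 1))) →
      Relation.TransGen r (p 0) (p n) := by
  intro n
  induction n with
  | zero => omega
  | succ m ih =>
    intro _ h
    rcases Nat.eq_zero_or_pos m with hm | hm
    · subst hm
      exact Relation.TransGen.single (h 0 (by omega))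
    · exact (ih hm (fun j hj => h j (by omega))).tail (h m (by omega))

/-- Key lemma: there is no possibly causal path from `u` to `v` together with a
directed path from `v` back to `u`. -/
lemma no_pc_cycle (hG : G.IsMPDAG) :
    ∀ n, ∀ p : ℕ → V, G.IsPath p n → G.PossCausal p n →
      Relation.TransGen G.DirE (p n) (p 0) → False := by
  intro n
  induction n using Nat.strong_induction_on with
  | _ n IH =>
    intro p hp hpc htg
    obtain ⟨m, rfl⟩ : ∃ m, n = m + 1 := ⟨n - 1, by have := hp.1; omega⟩
    by_cases hsh : ∃ j, j + 2 ≤ m + 1 ∧ G.Adj (p j) (p (j + 2))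
    · -- shortcut around the shielded triple
      obtain ⟨j, hj2, hadj⟩ := hsh
      have hqpath : G.IsPath (fun t => if t ≤ j then p t else p (t + 1)) m := by
        refine ⟨by omega, ?_, ?_⟩
        · intro t1 ht1 t2 ht2 he
          have he' : (if t1 ≤ j then p t1 else p (t1 + 1)) =
              (if t2 ≤ j then p t2 else p (t2 + 1)) := he
          by_cases h1 : t1 ≤ j <;> by_cases h2 : t2 ≤ j
          · rw [if_pos h1, if_pos h2] at he'
            exact hp.2.1 t1 (by omega) t2 (by omega) he'
          · rw [if_pos h1, if_neg h2] at he'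
            have := hp.2.1 t1 (by omega) (t2 + 1) (by omega) he'
            omega
          · rw [if_neg h1, if_pos h2] at he'
            have := hp.2.1 (t1 + 1) (by omega) t2 (by omega) he'
            omega
          · rw [if_neg h1, if_neg h2] at he'
            have := hp.2.1 (t1 + 1) (by omega) (t2 + 1) (by omega) he'
            omega
        · intro t ht
          show G.Adj (if t ≤ j then p t else p (t + 1))
            (if t + 1 ≤ j then p (t + 1) else p (t + 2))
          rcases lt_trichotomy t j with h1 | h1 | h1
          · rw [if_pos (by omega), if_pos (by omega)]
            exact hp.2.2 t (by omega)
          · subst h1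
            rw [if_pos (le_refl t), if_neg (by omega)]
            exact hadj
          · rw [if_neg (by omega), if_neg (by omega)]
            exact hp.2.2 (t + 1) (by omega)
      have hqpc : G.PossCausal (fun t => if t ≤ j then p t else p (t + 1)) m := by
        intro t1 t2 hlt hle
        show ¬ G.IntoE (if t2 ≤ j then p t2 else p (t2 + 1))
          (if t1 ≤ j then p t1 else p (t1 + 1))
        by_cases h1 : t1 ≤ j <;> by_cases h2 : t2 ≤ j <;>
          [rw [if_pos h1, if_pos h2]; rw [if_pos h1, if_neg h2];
            rw [if_neg h1, if_pos h2]; rw [if_neg h1, if_neg h2]]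
        · exact hpc t1 t2 (by omega) (by omega)
        · exact hpc t1 (t2 + 1) (by omega) (by omega)
        · exact hpc (t1 + 1) t2 (by omega) (by omega)
        · exact hpc (t1 + 1) (t2 + 1) (by omega) (by omega)
      have htg' : Relation.TransGen G.DirE
          ((fun t => if t ≤ j then p t else p (t + 1)) m)
          ((fun t => if t ≤ j then p t else p (t + 1)) 0) := by
        have e1 : (fun t => if t ≤ j then p t else p (t + 1)) m = p (m + 1) := by
          show (if m ≤ j then p m else p (m + 1)) = p (m + 1)
          rw [if_neg (by omega)]
        have e2 : (fun t => if t ≤ j then p t else p (t + 1)) 0 = p 0 := by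
          show (if 0 ≤ j then p 0 else p 1) = p 0
          rw [if_pos (by omega)]
        rw [e1, e2]
        exact htg
      exact IH m (by omega) _ hqpath hqpc htg'
    · -- unshielded
      rcases pc_edge hG hp hpc (j := 0) (by omega) with hdir | hund
      · rcases Nat.eq_zero_or_pos m with h1 | h1
        · subst h1
          exact acy hG (p 0) ((Relation.TransGen.single hdir).trans htg)
        · have hpath' : G.IsPath (fun t => p (t + 1)) m := by
            refine ⟨by omega, ?_, ?_⟩
            · intro t1 ht1 t2 ht2 he
              have := hp.2.1 (t1 + 1) (by omega) (t2 + 1) (by omega) he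
              omega
            · intro t ht
              exact hp.2.2 (t + 1) (by omega)
          have hpc' : G.PossCausal (fun t => p (t + 1)) m :=
            fun t1 t2 hlt hle => hpc (t1 + 1) (t2 + 1) (by omega) (by omega)
          exact IH m (by omega) _ hpath' hpc' (htg.tail hdir)
      · -- first edge undirected: orient it in a DAG of the class and propagate
        obtain ⟨D, hD, hD01⟩ := (orient_und hG hund).1
        have prop : ∀ j, j + 1 ≤ m + 1 → D.DirE (p j) (p (j + 1)) := by
          intro j
          induction j with
          | zero => intro _; exact hD01
          | succ t ih =>
            intro hle
            have hprev := ih (by omega)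
            have hadjD : D.Adj (p (t + 1)) (p (t + 2)) :=
              (hD.2.1 _ _).2 (hp.2.2 (t + 1) (by omega))
            rcases hD.1.1 _ _ hadjD with h | h
            · exact h
            · exfalso
              have hne : p t ≠ p (t + 2) := by
                intro e
                have := hp.2.1 t (by omega) (t + 2) (by omega) e
                omega
              have hnadj : ¬ D.Adj (p t) (p (t + 2)) := by
                intro hadj
                exact hsh ⟨t, by omega, (hD.2.1 _ _).1 hadj⟩
              have hGuc := (hD.2.2.2 (p t) (p (t + 1)) (p (t + 2))).1
                ⟨hprev, h, hne, hnadj⟩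
              exact hpc (t + 1) (t + 2) (by omega) (by omega) hGuc.2.1.1
        have hchain : Relation.TransGen D.DirE (p 0) (p (m + 1)) :=
          chain_tg (by omega) prop
        exact hD.1.2 (p 0) (hchain.trans (rep_tg hD htg))

/-- A possibly causal path can be prepended with a directed edge. -/
lemma prepend (hG : G.IsMPDAG) {a : V} {q : ℕ → V} {l : ℕ} (ha : G.DirE a (q 0))
    (hq : G.IsPath q l) (hqc : G.PossCausal q l) :
    ∃ p n, G.IsPath p n ∧ G.PossCausal p n ∧ p 0 = a ∧ p n = q l := by
  have hnotin : ∀ s, s ≤ l → q s ≠ a := by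
    intro s hs he
    rcases Nat.eq_zero_or_pos s with h0 | h0
    · subst h0
      exact dirE_ne ha (by rw [he])
    · exact hqc 0 s h0 hs (by rw [he]; exact ha.1)
  have hnoback : ∀ s, s ≤ l → ¬ G.DirE (q s) a := by
    intro s hs hd
    rcases Nat.eq_zero_or_pos s with h0 | h0
    · subst h0
      have h1 := ha.1
      rw [hd.2] at h1
      exact absurd h1 (by decide)
    · have hpath : G.IsPath q s :=
        ⟨h0, fun i hi j hj he => hq.2.1 i (by omega) j (by omega) he,
          fun i hi => hq.2.2 i (by omega)⟩
      have hpcs : G.PossCausal q s := fun i j hij hjs => hqc i j hij (by omega)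
      exact no_pc_cycle hG s q hpath hpcs ((Relation.TransGen.single hd).tail ha)
  refine ⟨fun t => if t = 0 then a else q (t - 1), l + 1, ⟨by omega, ?_, ?_⟩, ?_, rfl, ?_⟩
  · intro t1 ht1 t2 ht2 he
    have he' : (if t1 = 0 then a else q (t1 - 1)) =
        (if t2 = 0 then a else q (t2 - 1)) := he
    by_cases h1 : t1 = 0 <;> by_cases h2 : t2 = 0
    · omega
    · rw [if_pos h1, if_neg h2] at he'
      exact absurd he'.symm (hnotin (t2 - 1) (by omega))
    · rw [if_neg h1, if_pos h2] at he'
      exact absurd he' (hnotin (t1 - 1) (by omega))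
    · rw [if_neg h1, if_neg h2] at he'
      have := hq.2.1 (t1 - 1) (by omega) (t2 - 1) (by omega) he'
      omega
  · intro t ht
    show G.Adj (if t = 0 then a else q (t - 1)) (if t + 1 = 0 then a else q (t + 1 - 1))
    rcases Nat.eq_zero_or_pos t with h0 | h0
    · subst h0
      rw [if_pos rfl, if_neg (by omega)]
      exact adj_of_dirE ha
    · rw [if_neg (by omega), if_neg (by omega)]
      have h2 := hq.2.2 (t - 1) (by omega)
      have e3 : t - 1 + 1 = t ∧ t + 1 - 1 = t := by omega
      rw [e3.1] at h2
      rw [e3.2]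
      exact h2
  · intro i j hij hjl
    show ¬ G.IntoE (if j = 0 then a else q (j - 1)) (if i = 0 then a else q (i - 1))
    rw [if_neg (by omega)]
    rcases Nat.eq_zero_or_pos i with h0 | h0
    · subst h0
      rw [if_pos rfl]
      intro hinto
      exact hnoback (j - 1) (by omega) (intoE_dirE hG hinto)
    · rw [if_neg (by omega)]
      exact hqc (i - 1) (j - 1) (by omega) (by omega)
  · show (if l + 1 = 0 then a else q (l + 1 - 1)) = q l
    rw [if_neg (by omega), Nat.add_sub_cancel]

lemma reach_dir (hG : G.IsMPDAG) {w a b : V} (h : G.DirE a b) (hb : Reach G w b) :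
    Reach G w a := by
  rcases hb with rfl | ⟨q, l, hq, hqc, h0, hl⟩
  · right
    refine ⟨fun t => if t = 0 then a else b, 1, ⟨le_refl 1, ?_, ?_⟩, ?_, rfl, by norm_num⟩
    · intro t1 ht1 t2 ht2 he
      have he' : (if t1 = 0 then a else b) = (if t2 = 0 then a else b) := he
      by_cases h1 : t1 = 0 <;> by_cases h2 : t2 = 0
      · omega
      · rw [if_pos h1, if_neg h2] at he'
        exact absurd he' (dirE_ne h)
      · rw [if_neg h1, if_pos h2] at he'
        exact absurd he'.symm (dirE_ne h)
      · omega
    · intro t ht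
      show G.Adj (if t = 0 then a else b) (if t + 1 = 0 then a else b)
      have ht0 : t = 0 := by omega
      subst ht0
      rw [if_pos rfl, if_neg (by omega)]
      exact adj_of_dirE h
    · intro i j hij hjl
      show ¬ G.IntoE (if j = 0 then a else b) (if i = 0 then a else b)
      have hi0 : i = 0 := by omega
      have hj1 : j = 1 := by omega
      subst hi0
      subst hj1
      rw [if_pos rfl, if_neg (by omega)]
      intro hinto
      have h1 := h.2
      rw [show G.m b a = CondAdj.Mark.arrow from hinto] at h1
      exact absurd h1 (by decide)
  · subst h0
    obtain ⟨p, n, hp, hpc, hp0, hpn⟩ := prepend hG h hq hqc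
    exact Or.inr ⟨p, n, hp, hpc, hp0, by rw [hpn, hl]⟩

lemma reach_tg (hG : G.IsMPDAG) {w a b : V} (h : Relation.TransGen G.DirE a b)
    (hb : Reach G w b) : Reach G w a := by
  induction h using Relation.TransGen.head_induction_on with
  | single h1 => exact reach_dir hG h1 hb
  | head h' _ ih => exact reach_dir hG h' ih

/-- Core lemma: under amenability, anything reachable from a node on a proper
possibly causal path from `X` to `Y` is a possible descendant of `X`. -/
lemma forb_core (hG : G.IsMPDAG) {X Y : Set V} (hSD : CondAdj.StartsDirected G X Y)
    {p : ℕ → V} {n : ℕ} (hpt : G.IsPathFromTo p n X Y) (hpr : CondAdj.Proper p n X)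
    (hpc : G.PossCausal p n) {i : ℕ} (h1 : 1 ≤ i) (hi : i ≤ n) {w : V}
    (hw : Reach G w (p i)) : w ∈ G.PossDe X := by
  have hp := hpt.1
  have main : ∀ j, 1 ≤ j → j ≤ i → Relation.TransGen G.DirE (p 0) (p j) := by
    intro j
    induction j with
    | zero => omega
    | succ t ih =>
      intro _ hle
      rcases Nat.eq_zero_or_pos t with h0 | h0
      · subst h0
        exact Relation.TransGen.single (hSD p n hpt hpr hpc)
      · have htg := ih h0 (by omega)
        rcases pc_edge hG hp hpc (j := t) (by omega) with hdir | hund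
        · exact htg.tail hdir
        · rcases m1_star hG htg hund with h | hxund
          · exact h
          · exfalso
            set q : ℕ → V := fun s => if s = 0 then p 0 else p (t + s) with hqdef
            have hqn : q (n - t) = p n := by
              have h2 : ¬ (n - t = 0) := by omega
              show (if n - t = 0 then p 0 else p (t + (n - t))) = p n
              rw [if_neg h2]
              congr 1
              omega
            have hqpath : G.IsPath q (n - t) := by
              refine ⟨by omega, ?_, ?_⟩
              · intro s1 hs1 s2 hs2 he
                by_cases e1 : s1 = 0 <;> by_cases e2 : s2 = 0
                · omega
                · exfalso
                  have he' : p 0 = p (t + s2) := by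
                    simpa [hqdef, e1, e2] using he
                  have := hp.2.1 0 (by omega) (t + s2) (by omega) he'
                  omega
                · exfalso
                  have he' : p (t + s1) = p 0 := by
                    simpa [hqdef, e1, e2] using he
                  have := hp.2.1 (t + s1) (by omega) 0 (by omega) he'
                  omega
                · have he' : p (t + s1) = p (t + s2) := by
                    simpa [hqdef, e1, e2] using he
                  have := hp.2.1 (t + s1) (by omega) (t + s2) (by omega) he'
                  omega
              · intro s hs
                rcases Nat.eq_zero_or_pos s with h2 | h2
                · subst h2
                  show G.Adj (if (0:ℕ) = 0 then p 0 else p (t + 0))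
                    (if (1:ℕ) = 0 then p 0 else p (t + 1))
                  simp only [reduceIte]
                  exact adj_of_und hxund
                · show G.Adj (if s = 0 then p 0 else p (t + s))
                    (if s + 1 = 0 then p 0 else p (t + (s + 1)))
                  rw [if_neg (by omega), if_neg (by omega)]
                  have e3 : t + (s + 1) = (t + s) + 1 := by omega
                  rw [e3]
                  exact hp.2.2 (t + s) (by omega)
            have hqpc : G.PossCausal q (n - t) := by
              intro s1 s2 hlt hle2
              show ¬ G.IntoE (if s2 = 0 then p 0 else p (t + s2))
                (if s1 = 0 then p 0 else p (t + s1))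
              rw [if_neg (by omega)]
              rcases Nat.eq_zero_or_pos s1 with h2 | h2
              · subst h2
                simp only [reduceIte]
                exact hpc 0 (t + s2) (by omega) (by omega)
              · rw [if_neg (by omega)]
                exact hpc (t + s1) (t + s2) (by omega) (by omega)
            have hqft : G.IsPathFromTo q (n - t) X Y := by
              refine ⟨hqpath, ?_, ?_⟩
              · show (if (0:ℕ) = 0 then p 0 else p (t + 0)) ∈ X
                simp only [reduceIte]
                exact hpt.2.1
              · rw [hqn]
                exact hpt.2.2
            have hqpr : CondAdj.Proper q (n - t) X := by
              intro s hs1 hs2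
              show (if s = 0 then p 0 else p (t + s)) ∉ X
              rw [if_neg (by omega)]
              exact hpr (t + s) (by omega) (by omega)
            have hdir := hSD q (n - t) hqft hqpr hqpc
            have h2 : q 1 = p (t + 1) := by
              show (if (1:ℕ) = 0 then p 0 else p (t + 1)) = p (t + 1)
              rw [if_neg (by omega)]
            have h3 := hdir.1
            rw [h2] at h3
            show False
            have h4 : G.m (p 0) (p (t+1)) = CondAdj.Mark.tail := hxund.1
            have h5 : q 0 = p 0 := by
              show (if (0:ℕ) = 0 then p 0 else p (t + 0)) = p 0
              simp only [reduceIte]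
            rw [h5] at h3
            rw [h4] at h3
            exact absurd h3 (by decide)
  have hreach := reach_tg hG (main i h1 (le_refl i)) hw
  rcases hreach with hxw | ⟨q, l, hq, hqc, h0, hl⟩
  · exact Or.inl (hxw ▸ hpt.2.1)
  · exact Or.inr ⟨p 0, hpt.2.1, q, l, hq, hqc, h0, hl⟩

/-- Under amenability the forbidden set is contained in the possible
descendants of `X`. -/
lemma forb_subset (hG : G.IsMPDAG) {X Y : Set V} (hSD : CondAdj.StartsDirected G X Y)
    {w : V} (hw : w ∈ G.Forb X Y) : w ∈ G.PossDe X := by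
  rcases hw with hmed | ⟨m, hm, q, l, hq, hqc, h0, hl⟩
  · obtain ⟨p, n, hpt, hpr, hpc, i, h1, hi, hpi⟩ := hmed
    exact forb_core hG hSD hpt hpr hpc h1 hi (Or.inl hpi)
  · obtain ⟨p, n, hpt, hpr, hpc, i, h1, hi, hpi⟩ := hm
    refine forb_core hG hSD hpt hpr hpc h1 hi (Or.inr ⟨q, l, hq, hqc, ?_, hl⟩)
    rw [h0, hpi]

end CondAdjProof

/-- comparison of adjustment criteria: for pairwise disjoint
node sets `X, Y, Z, S` in an MPDAG `G` with `Z ∩ PossDe(X, G) = ∅`, `S`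
satisfies the conditional adjustment criterion relative to `(X, Y, Z)` in `G`
iff `S ∪ Z` satisfies the adjustment criterion relative to `(X, Y)` in `G`. -/
theorem condAdjCrit_iff_adjCrit_mpdag
    {V : Type} (G : CondAdj.MG V) (hG : G.IsMPDAG) (X Y Z S : Set V)
    (hXY : Disjoint X Y) (hXZ : Disjoint X Z) (hXS : Disjoint X S)
    (hYZ : Disjoint Y Z) (hYS : Disjoint Y S) (hZS : Disjoint Z S)
    (hZ : Z ∩ G.PossDe X = ∅) :
    CondAdj.CondAdjCrit G X Y Z S ↔ CondAdj.AdjCrit G X Y (S ∪ Z) := by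
  constructor
  · rintro ⟨hSD, hS, hB⟩
    refine ⟨hSD, ?_, hB⟩
    rw [Set.eq_empty_iff_forall_notMem]
    rintro v ⟨hv, hvf⟩
    rcases hv with hvS | hvZ
    · exact (Set.eq_empty_iff_forall_notMem.mp hS v) ⟨hvS, hvf⟩
    · exact (Set.eq_empty_iff_forall_notMem.mp hZ v)
        ⟨hvZ, CondAdjProof.forb_subset hG hSD hvf⟩
  · rintro ⟨hSD, hSZ, hB⟩
    refine ⟨hSD, ?_, hB⟩
    rw [Set.eq_empty_iff_forall_notMem]
    rintro v ⟨hvS, hvf⟩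
    exact (Set.eq_empty_iff_forall_notMem.mp hSZ v) ⟨Or.inl hvS, hvf⟩
end

section
/- Let X, Y, and Z be pairwise disjoint node sets in an MPDAG G = (V,E). Suppose there is a proper possibly causal path from X to Y in G that starts with an undirected edge and does not contain nodes in Z. Then there is one such path ⟨X = V0, …, Vk = Y⟩ with X ∈ X, Y ∈ Y, k ≥ 1, such that there exist two DAGs in [G] in which the paths corresponding to this node sequence take the forms X → … → Y and X ← V1 → … → Y (X ← Y when k = 1), respectively. -/
open MeasureTheory
open scoped ENNReal

namespace CondAdj

variable {V : Type}

section Aux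

namespace MG

variable {V : Type}

lemma DirE.adj' {D : MG V} {a b : V} (h : D.DirE a b) : D.Adj a b := by
  simp [Adj, h.1]

lemma dirE_asymm {D : MG V} {a b : V} (h : D.DirE a b) (h' : D.DirE b a) : False :=
  absurd (h.1.symm.trans h'.2) (by decide)

lemma dirE_irrefl' {D : MG V} {a : V} (h : D.DirE a a) : False :=
  absurd ((D.irrefl a).symm.trans h.1) (by decide)

lemma UndirE.adj' {G : MG V} {a b : V} (h : G.UndirE a b) : G.Adj a b := by
  rcases h with ⟨h1, _⟩ | ⟨h1, _⟩ <;> simp [Adj, h1]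

lemma UndirE.not_dirE {G : MG V} {a b : V} (h : G.UndirE a b) : ¬ G.DirE a b := by
  intro hd
  rcases h with ⟨h1, _⟩ | ⟨h1, _⟩ <;> exact absurd (h1.symm.trans hd.1) (by decide)

lemma UndirE.not_dirE_rev {G : MG V} {a b : V} (h : G.UndirE a b) : ¬ G.DirE b a := by
  intro hd
  rcases h with ⟨_, h2⟩ | ⟨_, h2⟩ <;> exact absurd (h2.symm.trans hd.1) (by decide)

variable {G : MG V}

lemma rep_adj {D : MG V} (hD : D ∈ G.rep) {a b : V} : D.Adj a b ↔ G.Adj a b := hD.2.1 a b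

lemma rep_dir {D : MG V} (hD : D ∈ G.rep) {a b : V} (h : G.DirE a b) : D.DirE a b :=
  hD.2.2.1 a b h

lemma rep_dichotomy {D : MG V} (hD : D ∈ G.rep) {a b : V} (h : G.Adj a b) :
    D.DirE a b ∨ D.DirE b a :=
  hD.1.1 a b ((rep_adj hD).mpr h)

/-- In a DAG of `[G]`, an arrow `x → b` together with an undirected edge `b − c`
and nonadjacent `x, c` forces `b → c` (else an unshielded collider appears). -/
lemma rep_force {D : MG V} (hD : D ∈ G.rep) {x b c : V} (hxb : D.DirE x b)
    (hbc : G.UndirE b c) (hne : x ≠ c) (hnadj : ¬ G.Adj x c) : D.DirE b c := by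
  rcases rep_dichotomy hD hbc.adj' with h | h
  · exact h
  · exfalso
    have hcol : D.UnshieldedCollider x b c :=
      ⟨hxb, h, hne, fun ha => hnadj ((rep_adj hD).mp ha)⟩
    exact hbc.not_dirE_rev ((hD.2.2.2 x b c).mp hcol).2.1

/-! ### The merge of two DAGs in `[G]` along a descendant-closed set -/

open Classical in
/-- Merge two DAGs: use `D`'s orientation on edges whose `D`-head lies in `A`
(or on which `D` and `D'` agree), and `D'`'s orientation elsewhere. -/
noncomputable def merge (D D' : MG V) (A : Set V) : MG V where
  m := fun u v =>
    if D.DirE u v ∧ (v ∈ A ∨ D'.DirE u v) then Mark.arrow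
    else if D.DirE v u ∧ (u ∈ A ∨ D'.DirE v u) then Mark.tail
    else if D'.DirE u v ∧ D.DirE v u then Mark.arrow
    else if D'.DirE v u ∧ D.DirE u v then Mark.tail
    else Mark.none
  none_symm := by
    intro a b
    split_ifs <;> simp_all
  irrefl := by
    intro a
    have h0 : ¬ D.DirE a a := fun h => dirE_irrefl' h
    have h0' : ¬ D'.DirE a a := fun h => dirE_irrefl' h
    simp [h0, h0']

variable {D D' : MG V} {A : Set V}

lemma merge_dirE_iff {u v : V} :
    (merge D D' A).DirE u v ↔
      ((D.DirE u v ∧ (v ∈ A ∨ D'.DirE u v)) ∨ (D'.DirE u v ∧ D.DirE v u ∧ u ∉ A)) := by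
  classical
  constructor
  · rintro ⟨h1, -⟩
    simp only [merge] at h1
    split_ifs at h1 with c1 c2 c3
    · exact Or.inl c1
    · exact Or.inr ⟨c3.1, c3.2, fun hu => c2 ⟨c3.2, Or.inl hu⟩⟩
  · intro h
    have harrow : (merge D D' A).m u v = Mark.arrow := by
      simp only [merge]
      rcases h with h | h
      · rw [if_pos h]
      · have nc1 : ¬ (D.DirE u v ∧ (v ∈ A ∨ D'.DirE u v)) :=
          fun hc => dirE_asymm hc.1 h.2.1
        have nc2 : ¬ (D.DirE v u ∧ (u ∈ A ∨ D'.DirE v u)) := by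
          rintro ⟨-, hc2⟩
          rcases hc2 with hc2 | hc2
          · exact h.2.2 hc2
          · exact dirE_asymm h.1 hc2
        rw [if_neg nc1, if_neg nc2, if_pos ⟨h.1, h.2.1⟩]
    have htail : (merge D D' A).m v u = Mark.tail := by
      simp only [merge]
      rcases h with h | h
      · have nc1 : ¬ (D.DirE v u ∧ (u ∈ A ∨ D'.DirE v u)) :=
          fun hc => dirE_asymm hc.1 h.1
        rw [if_neg nc1, if_pos h]
      · have nc1 : ¬ (D.DirE v u ∧ (u ∈ A ∨ D'.DirE v u)) := by
          rintro ⟨-, hc⟩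
          rcases hc with hc | hc
          · exact h.2.2 hc
          · exact dirE_asymm h.1 hc
        have nc2 : ¬ (D.DirE u v ∧ (v ∈ A ∨ D'.DirE u v)) :=
          fun hc => dirE_asymm hc.1 h.2.1
        have nc3 : ¬ (D'.DirE v u ∧ D.DirE u v) :=
          fun hc => dirE_asymm hc.1 h.1
        rw [if_neg nc1, if_neg nc2, if_neg nc3, if_pos ⟨h.1, h.2.1⟩]
    exact ⟨harrow, htail⟩

lemma merge_dirE_of_head {u v : V} (h : D.DirE u v) (hv : v ∈ A) : (merge D D' A).DirE u v :=
  merge_dirE_iff.mpr (Or.inl ⟨h, Or.inl hv⟩)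

lemma merge_dirE_of_agree {u v : V} (h : D.DirE u v) (h' : D'.DirE u v) : (merge D D' A).DirE u v :=
  merge_dirE_iff.mpr (Or.inl ⟨h, Or.inr h'⟩)

lemma merge_dirE_of_other {u v : V} (h' : D'.DirE u v) (h : D.DirE v u) (hu : u ∉ A) :
    (merge D D' A).DirE u v :=
  merge_dirE_iff.mpr (Or.inr ⟨h', h, hu⟩)

lemma adj_symm' {E : MG V} {a b : V} (h : E.Adj a b) : E.Adj b a :=
  fun hn => h ((E.none_symm a b).mpr hn)

lemma DirE.adjRev {E : MG V} {a b : V} (h : E.DirE a b) : E.Adj b a := by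
  simp [Adj, h.2]

lemma merge_adj (hD : D ∈ G.rep) (hD' : D' ∈ G.rep) {u v : V} :
    (merge D D' A).Adj u v ↔ G.Adj u v := by
  classical
  constructor
  · intro h
    simp only [merge, Adj] at h
    split_ifs at h with c1 c2 c3 c4
    · exact (rep_adj hD).mp c1.1.adj'
    · exact (rep_adj hD).mp c2.1.adjRev
    · exact (rep_adj hD).mp c3.2.adjRev
    · exact (rep_adj hD).mp c4.2.adj'
    · exact absurd rfl h
  · intro h
    rcases rep_dichotomy hD h with hd | hd
    · by_cases hv : v ∈ A
      · exact (merge_dirE_of_head hd hv).adj'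
      · rcases rep_dichotomy hD' h with hd' | hd'
        · exact (merge_dirE_of_agree hd hd').adj'
        · exact (merge_dirE_of_other hd' hd hv).adjRev
    · by_cases hu : u ∈ A
      · exact (merge_dirE_of_head hd hu).adjRev
      · rcases rep_dichotomy hD' h with hd' | hd'
        · exact (merge_dirE_of_other hd' hd hu).adj'
        · exact (merge_dirE_of_agree hd hd').adjRev

/-- Inversion facts for merge. -/
lemma merge_from_A (hA : ∀ z w, z ∈ A → D.DirE z w → w ∈ A) {u v : V}
    (h : (merge D D' A).DirE u v) (hu : u ∈ A) : D.DirE u v ∧ v ∈ A := by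
  rcases merge_dirE_iff.mp h with h1 | h1
  · exact ⟨h1.1, hA u v hu h1.1⟩
  · exact absurd hu h1.2.2

lemma merge_into_A (hA : ∀ z w, z ∈ A → D.DirE z w → w ∈ A) {u v : V}
    (h : (merge D D' A).DirE u v) (hv : v ∈ A) : D.DirE u v := by
  rcases merge_dirE_iff.mp h with h1 | h1
  · exact h1.1
  · exact absurd (hA v u hv h1.2.1) h1.2.2

lemma merge_outside {u v : V}
    (h : (merge D D' A).DirE u v) (hv : v ∉ A) : D'.DirE u v := by
  rcases merge_dirE_iff.mp h with h1 | h1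
  · rcases h1.2 with h2 | h2
    · exact absurd h2 hv
    · exact h2
  · exact h1.1

theorem merge_mem_rep (hD : D ∈ G.rep) (hD' : D' ∈ G.rep)
    (hA : ∀ z w, z ∈ A → D.DirE z w → w ∈ A) : merge D D' A ∈ G.rep := by
  classical
  have hadj : ∀ u v, (merge D D' A).Adj u v ↔ G.Adj u v := fun u v => merge_adj hD hD'
  refine ⟨⟨?_, ?_⟩, hadj, ?_, ?_⟩
  · -- totality
    intro u v h
    have hg := (hadj u v).mp h
    rcases rep_dichotomy hD hg with hd | hd
    · by_cases hv : v ∈ A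
      · exact Or.inl (merge_dirE_of_head hd hv)
      · rcases rep_dichotomy hD' hg with hd' | hd'
        · exact Or.inl (merge_dirE_of_agree hd hd')
        · exact Or.inr (merge_dirE_of_other hd' hd hv)
    · by_cases hu : u ∈ A
      · exact Or.inr (merge_dirE_of_head hd hu)
      · rcases rep_dichotomy hD' hg with hd' | hd'
        · exact Or.inl (merge_dirE_of_other hd' hd hu)
        · exact Or.inr (merge_dirE_of_agree hd hd')
  · -- acyclicity
    have key1 : ∀ x y, Relation.TransGen (merge D D' A).DirE x y → x ∈ A →
        y ∈ A ∧ Relation.TransGen D.DirE x y := by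
      intro x y h
      induction h with
      | single e => exact fun hx => ⟨(merge_from_A hA e hx).2,
          Relation.TransGen.single (merge_from_A hA e hx).1⟩
      | tail h e ih =>
        intro hx
        obtain ⟨hb, hT⟩ := ih hx
        obtain ⟨he, hc⟩ := merge_from_A hA e hb
        exact ⟨hc, hT.tail he⟩
    have key2 : ∀ x y, Relation.TransGen (merge D D' A).DirE x y → y ∉ A →
        Relation.TransGen D'.DirE x y := by
      intro x y h
      induction h with
      | single e => exact fun hy => Relation.TransGen.single (merge_outside e hy)
      | tail h e ih =>
        intro hy
        rename_i b c
        have hb : b ∉ A := fun hbA => hy (merge_from_A hA e hbA).2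
        exact (ih hb).tail (merge_outside e hy)
    intro u hu
    by_cases h : u ∈ A
    · exact hD.1.2 u (key1 u u hu h).2
    · exact hD'.1.2 u (key2 u u hu h)
  · -- directed edges of G
    intro a b h
    exact merge_dirE_of_agree (rep_dir hD h) (rep_dir hD' h)
  · -- unshielded colliders
    intro x y z
    constructor
    · rintro ⟨hxy, hzy, hne, hnadj⟩
      have hnadjG : ¬ G.Adj x z := fun h => hnadj ((hadj x z).mpr h)
      by_cases hy : y ∈ A
      · have h1 := merge_into_A hA hxy hy
        have h2 := merge_into_A hA hzy hy
        exact (hD.2.2.2 x y z).mp ⟨h1, h2, hne,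
          fun h => hnadjG ((rep_adj hD).mp h)⟩
      · have h1 := merge_outside hxy hy
        have h2 := merge_outside hzy hy
        exact (hD'.2.2.2 x y z).mp ⟨h1, h2, hne,
          fun h => hnadjG ((rep_adj hD').mp h)⟩
    · rintro ⟨hxy, hzy, hne, hnadj⟩
      exact ⟨merge_dirE_of_agree (rep_dir hD hxy) (rep_dir hD' hxy),
        merge_dirE_of_agree (rep_dir hD hzy) (rep_dir hD' hzy), hne,
        fun h => hnadj ((hadj x z).mp h)⟩

end MG

variable {V : Type}

/-- Deleting an interior node (when a shortcut edge exists) from a witnessing path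
yields a shorter witnessing path. -/
lemma skip_exists {G : MG V} {X Y Z : Set V} {p : ℕ → V} {n i₀ : ℕ}
    (hP : G.IsPathFromTo p n X Y ∧ Proper p n X ∧ G.PossCausal p n ∧
      G.UndirE (p 0) (p 1) ∧ ∀ i ≤ n, p i ∉ Z)
    (h1 : 1 ≤ i₀) (h2 : i₀ < n)
    (hadj : G.Adj (p (i₀ - 1)) (p (i₀ + 1)))
    (hst : i₀ = 1 → G.UndirE (p 0) (p 2)) :
    ∃ q, G.IsPathFromTo q (n - 1) X Y ∧ Proper q (n - 1) X ∧ G.PossCausal q (n - 1) ∧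
      G.UndirE (q 0) (q 1) ∧ ∀ i ≤ n - 1, q i ∉ Z := by
  obtain ⟨⟨⟨hn1, hinj, hadjp⟩, hx0, hyn⟩, hprop, hpc, hu01, hz⟩ := hP
  set σ : ℕ → ℕ := fun j => if j < i₀ then j else j + 1 with hσ
  have hσmono : ∀ {i j : ℕ}, i < j → σ i < σ j := by
    intro i j hij
    simp only [hσ]
    split_ifs <;> omega
  have hσle : ∀ {j : ℕ}, j ≤ n - 1 → σ j ≤ n := by
    intro j hj; simp only [hσ]; split_ifs <;> omega
  have hσ0 : σ 0 = 0 := by simp only [hσ]; split_ifs <;> omega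
  have hσlast : σ (n - 1) = n := by simp only [hσ]; split_ifs <;> omega
  refine ⟨fun j => p (σ j), ⟨⟨by omega, ?_, ?_⟩, ?_, ?_⟩, ?_, ?_, ?_, ?_⟩
  · -- injectivity
    intro i hi j hj hpij
    rcases Nat.lt_trichotomy i j with h | h | h
    · exact absurd (hinj _ (hσle hi) _ (hσle hj) hpij) (by have := hσmono h; omega)
    · exact h
    · exact absurd (hinj _ (hσle hi) _ (hσle hj) hpij).symm (by have := hσmono h; omega)
  · -- adjacency
    intro i hi
    show G.Adj (p (σ i)) (p (σ (i + 1)))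
    rcases Nat.lt_trichotomy (i + 1) i₀ with h | h | h
    · have e1 : σ i = i := by simp only [hσ]; split_ifs <;> omega
      have e2 : σ (i + 1) = i + 1 := by simp only [hσ]; split_ifs <;> omega
      rw [e1, e2]; exact hadjp i (by omega)
    · have e1 : σ i = i₀ - 1 := by simp only [hσ]; split_ifs <;> omega
      have e2 : σ (i + 1) = i₀ + 1 := by simp only [hσ]; split_ifs <;> omega
      rw [e1, e2]; exact hadj
    · have e1 : σ i = i + 1 := by simp only [hσ]; split_ifs <;> omega
      have e2 : σ (i + 1) = i + 2 := by simp only [hσ]; split_ifs <;> omega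
      rw [e1, e2]; exact hadjp (i + 1) (by omega)
  · show p (σ 0) ∈ X
    rw [hσ0]; exact hx0
  · show p (σ (n - 1)) ∈ Y
    rw [hσlast]; exact hyn
  · intro i hi1 hin
    show p (σ i) ∉ X
    have hle : 1 ≤ σ i := by simp only [hσ]; split_ifs <;> omega
    exact hprop _ hle (hσle hin)
  · intro i j hij hj
    exact hpc _ _ (hσmono hij) (hσle hj)
  · show G.UndirE (p (σ 0)) (p (σ 1))
    rw [hσ0]
    by_cases h : 1 < i₀
    · have e1 : σ 1 = 1 := by simp only [hσ]; split_ifs <;> omega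
      rw [e1]; exact hu01
    · have e1 : σ 1 = 2 := by simp only [hσ]; split_ifs <;> omega
      rw [e1]; exact hst (by omega)
  · intro i hi
    exact hz _ (hσle hi)

end Aux

end CondAdj

/-- if there is a proper possibly causal path from `X` to `Y`
in the MPDAG `G` starting with an undirected edge and avoiding `Z`, then there
is one such path whose corresponding paths in two DAGs of `[G]` take the forms
`X → ⋯ → Y` and `X ← V₁ → ⋯ → Y` (`X ← Y` when the path is a single edge). -/
theorem possCausal_undirected_two_dags
    {V : Type} (G : CondAdj.MG V) (hG : G.IsMPDAG) (X Y Z : Set V)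
    (hXY : Disjoint X Y) (hXZ : Disjoint X Z) (hYZ : Disjoint Y Z)
    (hpath : ∃ p n, G.IsPathFromTo p n X Y ∧ CondAdj.Proper p n X ∧
      G.PossCausal p n ∧ G.UndirE (p 0) (p 1) ∧ ∀ i ≤ n, p i ∉ Z) :
    ∃ p n, (G.IsPathFromTo p n X Y ∧ CondAdj.Proper p n X ∧ G.PossCausal p n ∧
        G.UndirE (p 0) (p 1) ∧ ∀ i ≤ n, p i ∉ Z) ∧
      (∃ D₁ ∈ G.rep, ∀ i < n, D₁.DirE (p i) (p (i + 1))) ∧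
      ∃ D₂ ∈ G.rep, D₂.DirE (p 1) (p 0) ∧
        ∀ i, 1 ≤ i → i < n → D₂.DirE (p i) (p (i + 1)) := by
  classical
  obtain ⟨hPDG, -, hmax⟩ := hG
  have hQex : Set.Nonempty {k : ℕ | ∃ p : ℕ → V, G.IsPathFromTo p k X Y ∧
      CondAdj.Proper p k X ∧ G.PossCausal p k ∧ G.UndirE (p 0) (p 1) ∧
      ∀ i ≤ k, p i ∉ Z} := by
    obtain ⟨p, n, h⟩ := hpath; exact ⟨n, p, h⟩
  obtain ⟨n, hn, hmin⟩ := (wellFounded_lt : WellFounded ((· < ·) : ℕ → ℕ → Prop)).has_min _ hQex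
  obtain ⟨p, hP⟩ := hn
  have hn1 : 1 ≤ n := hP.1.1.1
  have hinj := hP.1.1.2.1
  have hadjp := hP.1.1.2.2
  have hx0 := hP.1.2.1
  have hpc := hP.2.2.1
  have hu01 := hP.2.2.2.1
  have hne : ∀ i j, i ≤ n → j ≤ n → i ≠ j → p i ≠ p j := by
    intro i j hi hj hij hpij
    exact hij (hinj i hi j hj hpij)
  have hedge : ∀ i, i < n → G.DirE (p i) (p (i + 1)) ∨ G.UndirE (p i) (p (i + 1)) := by
    intro i hi
    rcases hPDG.1 _ _ (hadjp i hi) with h | h | h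
    · exact Or.inl h
    · exact absurd (show G.IntoE (p (i + 1)) (p i) from h.1)
        (hpc i (i + 1) (by omega) (by omega))
    · exact Or.inr (Or.inl h)
  refine ⟨p, n, hP, ?_⟩
  rcases eq_or_lt_of_le hn1 with h1n | h2n
  · -- n = 1
    obtain ⟨D1, hD1, hd1⟩ := (hmax _ _ hu01).1
    obtain ⟨D2, hD2, hd2⟩ := (hmax _ _ hu01).2
    constructor
    · refine ⟨D1, hD1, ?_⟩
      intro i hi
      have hi0 : i = 0 := by omega
      subst hi0; exact hd1
    · exact ⟨D2, hD2, hd2, fun i hi1 hi2 => absurd (lt_of_le_of_lt hi1 hi2) (by omega)⟩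
  · -- n ≥ 2
    have hadj01 : G.Adj (p 0) (p 1) := hadjp 0 (by omega)
    have hadj12 : G.Adj (p 1) (p 2) := hadjp 1 (by omega)
    have hM1 : G.Adj (p 0) (p 2) → G.DirE (p 0) (p 2) := by
      intro hadj02
      rcases hPDG.1 _ _ hadj02 with h | h | h
      · exact h
      · exact absurd (show G.IntoE (p 2) (p 0) from h.1) (hpc 0 2 (by omega) (by omega))
      · exfalso
        obtain ⟨q, hq⟩ := CondAdj.skip_exists hP (le_refl 1) h2n
          (by simpa using hadj02) (fun _ => Or.inl h)
        exact hmin (n - 1) ⟨q, hq⟩ (by omega)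
    have hM2 : ∀ i, 2 ≤ i → i < n → ¬ G.Adj (p (i - 1)) (p (i + 1)) := by
      intro i hi2 hin hadji
      obtain ⟨q, hq⟩ := CondAdj.skip_exists hP (by omega) hin hadji
        (fun h => absurd h (by omega))
      exact hmin (n - 1) ⟨q, hq⟩ (by omega)
    have chain : ∀ D, D ∈ G.rep → D.DirE (p 1) (p 2) →
        ∀ i, 1 ≤ i → i < n → D.DirE (p i) (p (i + 1)) := by
      intro D hD hbase i hi1
      induction i, hi1 using Nat.le_induction with
      | base => exact fun _ => hbase
      | succ i hi ih =>
        intro hin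
        have hiprev : D.DirE (p i) (p (i + 1)) := ih (by omega)
        rcases hedge (i + 1) hin with h | h
        · exact CondAdj.MG.rep_dir hD h
        · refine CondAdj.MG.rep_force hD hiprev h ?_ ?_
          · exact hne i (i + 2) (by omega) (by omega) (by omega)
          · have h' := hM2 (i + 1) (by omega) hin
            simpa using h'
    have hD₁ : ∃ D₁ ∈ G.rep, D₁.DirE (p 0) (p 1) ∧ D₁.DirE (p 1) (p 2) := by
      rcases hedge 1 h2n with h12 | h12
      · obtain ⟨D, hD, hd⟩ := (hmax _ _ hu01).1
        exact ⟨D, hD, hd, CondAdj.MG.rep_dir hD h12⟩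
      · by_cases hadj02 : G.Adj (p 0) (p 2)
        · have h02 := hM1 hadj02
          obtain ⟨D, hD, hDbc⟩ := (hmax _ _ h12).1
          rcases CondAdj.MG.rep_dichotomy hD hadj01 with hDab | hDba
          · exact ⟨D, hD, hDab, hDbc⟩
          · obtain ⟨D', hD', hD'ab⟩ := (hmax _ _ hu01).1
            rcases CondAdj.MG.rep_dichotomy hD' hadj12 with hD'bc | hD'cb
            · exact ⟨D', hD', hD'ab, hD'bc⟩
            · refine ⟨CondAdj.MG.merge D D' {w | Relation.ReflTransGen D.DirE (p 2) w},
                CondAdj.MG.merge_mem_rep hD hD' (fun z w hz hzw => hz.tail hzw), ?_, ?_⟩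
              · refine CondAdj.MG.merge_dirE_of_other hD'ab hDba ?_
                intro hmem
                exact hD.1.2 (p 0)
                  (Relation.TransGen.head' (CondAdj.MG.rep_dir hD h02) hmem)
              · exact CondAdj.MG.merge_dirE_of_head hDbc Relation.ReflTransGen.refl
        · obtain ⟨D, hD, hd⟩ := (hmax _ _ hu01).1
          exact ⟨D, hD, hd, CondAdj.MG.rep_force hD hd h12
            (hne 0 2 (by omega) (by omega) (by omega)) hadj02⟩
    have hD₂ : ∃ D₂ ∈ G.rep, D₂.DirE (p 1) (p 0) ∧ D₂.DirE (p 1) (p 2) := by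
      rcases hedge 1 h2n with h12 | h12
      · obtain ⟨D, hD, hd⟩ := (hmax _ _ hu01).2
        exact ⟨D, hD, hd, CondAdj.MG.rep_dir hD h12⟩
      · obtain ⟨D, hD, hDba⟩ := (hmax _ _ hu01).2
        obtain ⟨D', hD', hD'bc⟩ := (hmax _ _ h12).1
        refine ⟨CondAdj.MG.merge D D' {w | Relation.ReflTransGen D.DirE (p 0) w},
          CondAdj.MG.merge_mem_rep hD hD' (fun z w hz hzw => hz.tail hzw), ?_, ?_⟩
        · exact CondAdj.MG.merge_dirE_of_head hDba Relation.ReflTransGen.refl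
        · rcases CondAdj.MG.rep_dichotomy hD hadj12 with hd | hd
          · exact CondAdj.MG.merge_dirE_of_agree hd hD'bc
          · refine CondAdj.MG.merge_dirE_of_other hD'bc hd ?_
            intro hmem
            exact hD.1.2 (p 1) (Relation.TransGen.head' hDba hmem)
    obtain ⟨D₁, hD₁r, h10, h12'⟩ := hD₁
    obtain ⟨D₂, hD₂r, h20, h22⟩ := hD₂
    constructor
    · refine ⟨D₁, hD₁r, ?_⟩
      intro i hi
      rcases Nat.eq_zero_or_pos i with h0 | h0
      · subst h0; exact h10
      · exact chain D₁ hD₁r h12' i h0 hi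
    · exact ⟨D₂, hD₂r, h20, fun i hi1 hi2 => chain D₂ hD₂r h22 i hi1 hi2⟩
end

section
/- Let X, Y, Z, and S be pairwise disjoint node sets in a DAG D with Z ∩ De(X,D) = ∅. Then S satisfies the conditional back-door criterion relative to (X,Y,Z) in D, i.e., S ∩ De(X,D) = ∅ and S ∪ Z blocks all proper back-door paths from X to Y in D, if and only if S ∪ Z satisfies the generalized back-door criterion relative to (X,Y) in D, i.e., (S ∪ Z) ∩ De(X,D) = ∅ and for every X ∈ X, the set S ∪ Z ∪ X ∖ {X} blocks all back-door paths from X to Y in D. -/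
open MeasureTheory
open scoped ENNReal

section BDAux

open CondAdj CondAdj.MG

variable {V : Type}

lemma bd_not_dirE_rev {D : CondAdj.MG V} {a b : V} (h : D.DirE a b) :
    ¬ D.DirE b a := by
  intro h'
  have h2 := h'.2
  rw [h.1] at h2
  exact CondAdj.Mark.noConfusion h2

lemma bd_adj_of_dirE {D : CondAdj.MG V} {a b : V} (h : D.DirE a b) : D.Adj a b := by
  intro h'
  rw [h.1] at h'
  exact CondAdj.Mark.noConfusion h'

lemma bd_adj_symm {D : CondAdj.MG V} {a b : V} (h : D.Adj a b) : D.Adj b a :=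
  fun h' => h ((D.none_symm a b).2 h')

lemma bd_not_intoE_of_dirE {D : CondAdj.MG V} {a b : V} (h : D.DirE a b) :
    ¬ D.IntoE b a := by
  intro h'
  have h2 := h.2
  rw [h'] at h2
  exact CondAdj.Mark.noConfusion h2

lemma bd_not_dirE_of_intoE {D : CondAdj.MG V} {a b : V} (h : D.IntoE b a) :
    ¬ D.DirE a b := fun h' => bd_not_intoE_of_dirE h' h

lemma bd_dirE_of_intoE {D : CondAdj.MG V} (hD : D.IsDAG) {a b : V}
    (hadj : D.Adj a b) (h : D.IntoE a b) : D.DirE a b := by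
  rcases hD.1 a b hadj with h' | h'
  · exact h'
  · exact absurd h (bd_not_intoE_of_dirE h')

lemma bd_dirE_of_not_intoE {D : CondAdj.MG V} (hD : D.IsDAG) {a b : V}
    (hadj : D.Adj a b) (h : ¬ D.IntoE a b) : D.DirE b a := by
  rcases hD.1 a b hadj with h' | h'
  · exact absurd h'.1 h
  · exact h'

lemma bd_desc_chain {D : CondAdj.MG V} {e : ℕ → V} {t : ℕ}
    (h : ∀ s < t, D.DirE (e s) (e (s + 1))) : ∀ s ≤ t, D.Desc (e 0) (e s) := by
  intro s hs
  induction s with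
  | zero => exact Relation.ReflTransGen.refl
  | succ s ih =>
      exact Relation.ReflTransGen.tail (ih (by omega)) (h s (by omega))

lemma bd_colliderAt_iff {D : CondAdj.MG V} {p q : ℕ → V} {i j : ℕ}
    (h1 : p (i - 1) = q (j - 1)) (h2 : p i = q j) (h3 : p (i + 1) = q (j + 1)) :
    D.ColliderAt p i ↔ D.ColliderAt q j := by
  unfold CondAdj.MG.ColliderAt
  rw [h1, h2, h3]

/-- A directed path from `a` ending at its first node in `X`. -/
lemma bd_exists_dirPath_firstHit {D : CondAdj.MG V} {X : Set V} {a b : V}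
    (h : D.Desc a b) (hb : b ∈ X) (ha : a ∉ X) :
    ∃ (e : ℕ → V) (t : ℕ), 1 ≤ t ∧ e 0 = a ∧ e t ∈ X ∧
      (∀ s < t, D.DirE (e s) (e (s + 1))) ∧ ∀ s < t, e s ∉ X := by
  induction h using Relation.ReflTransGen.head_induction_on with
  | refl => exact absurd hb ha
  | @head a' c hstep htail ih =>
      by_cases hc : c ∈ X
      · refine ⟨fun s => if s = 0 then a' else c, 1, le_rfl, rfl, by simp [hc], ?_, ?_⟩
        · intro s hs
          have : s = 0 := by omega
          subst this
          simpa using hstep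
        · intro s hs
          have : s = 0 := by omega
          subst this
          simpa using ha
      · obtain ⟨e, t, ht, he0, het, hsteps, hnot⟩ := ih hc
        refine ⟨fun s => if s = 0 then a' else e (s - 1), t + 1, by omega, rfl, ?_, ?_, ?_⟩
        · simpa using het
        · intro s hs
          rcases Nat.eq_zero_or_pos s with rfl | hpos
          · simpa [he0] using hstep
          · have h1 : ¬ (s = 0) := by omega
            have h2 : ¬ (s + 1 = 0) := by omega
            simp only [if_neg h1, if_neg h2]
            have := hsteps (s - 1) (by omega)
            rw [show s - 1 + 1 = s by omega] at this
            exact this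
        · intro s hs
          rcases Nat.eq_zero_or_pos s with rfl | hpos
          · simpa using ha
          · simp only [if_neg (by omega : ¬ (s = 0))]
            exact hnot (s - 1) (by omega)

/-- A `W`-open walk from `X` to `Y`, proper, starting with a back-door edge. -/
def BDOpenWalk (D : CondAdj.MG V) (W X Y : Set V) (p : ℕ → V) (n : ℕ) : Prop :=
  1 ≤ n ∧ (∀ i < n, D.Adj (p i) (p (i + 1))) ∧ p 0 ∈ X ∧ p n ∈ Y ∧
    (∀ i, 1 ≤ i → i ≤ n → p i ∉ X) ∧ ¬ D.DirE (p 0) (p 1) ∧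
    ∀ i, 1 ≤ i → i < n →
      (D.ColliderAt p i → ∃ d, D.Desc (p i) d ∧ d ∈ W) ∧
      (¬ D.ColliderAt p i → p i ∉ W)

/-- From a `W`-open proper back-door walk one can extract a `W`-unblocked proper
back-door path. -/
lemma bd_exists_path_of_openWalk {D : CondAdj.MG V} (hD : D.IsDAG) {W X Y : Set V}
    (hXY : Disjoint X Y) :
    ∀ n, ∀ p : ℕ → V, BDOpenWalk D W X Y p n →
      ∃ (q : ℕ → V) (m : ℕ), D.IsPathFromTo q m X Y ∧ CondAdj.Proper q m X ∧
        ¬ D.DirE (q 0) (q 1) ∧ ¬ D.Blocks W q m := by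
  intro n
  induction n using Nat.strong_induction_on with
  | _ n IH =>
  classical
  intro p hw
  obtain ⟨hn, hadj, h0, hY, hprop, hbd, hstat⟩ := hw
  by_cases hinj : ∀ i ≤ n, ∀ j ≤ n, p i = p j → i = j
  · refine ⟨p, n, ⟨⟨hn, hinj, hadj⟩, h0, hY⟩, hprop, hbd, ?_⟩
    rintro ⟨i, hi1, hi2, h | h⟩
    · exact (hstat i hi1 hi2).2 h.1 h.2
    · obtain ⟨d, hd, hdW⟩ := (hstat i hi1 hi2).1 h.1
      exact h.2 d hd hdW
  · push_neg at hinj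
    obtain ⟨a, ha, b, hb, hpab, hab⟩ := hinj
    obtain ⟨i, j, hij, hjn, hpij⟩ : ∃ i j, i < j ∧ j ≤ n ∧ p i = p j := by
      rcases hab.lt_or_gt with h | h
      exacts [⟨a, b, h, hb, hpab⟩, ⟨b, a, h, ha, hpab.symm⟩]
    have hi1 : 1 ≤ i := by
      rcases Nat.eq_zero_or_pos i with rfl | h
      · exact absurd (hpij ▸ h0) (hprop j (by omega) hjn)
      · exact h
    rcases eq_or_lt_of_le hjn with rfl | hjlt
    · -- j = n : truncate the walk at i
      refine IH i (by omega) p ⟨hi1, fun m hm => hadj m (by omega), h0,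
        by rw [hpij]; exact hY, fun m h1 h2 => hprop m h1 (by omega), hbd,
        fun m h1 h2 => hstat m h1 (by omega)⟩
    · -- i < j < n : cut out the loop between i and j
      set q : ℕ → V := fun m => if m ≤ i then p m else p (m + (j - i)) with hqdef
      have hq1 : ∀ m, m ≤ i → q m = p m := fun m hm => if_pos hm
      have hq2 : ∀ m, i ≤ m → q m = p (m + (j - i)) := by
        intro m hm
        rcases eq_or_lt_of_le hm with heq | h
        · subst heq
          rw [hq1 i le_rfl, hpij]
          congr 1
          omega
        · exact if_neg (by omega)
      set n' := n - (j - i) with hn'def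
      have hili : i < n' := by omega
      have hadj' : ∀ m < n', D.Adj (q m) (q (m + 1)) := by
        intro m hm
        rcases Nat.lt_or_ge m i with h | h
        · rw [hq1 m (by omega), hq1 (m + 1) (by omega)]
          exact hadj m (by omega)
        · rw [hq2 m h, hq2 (m + 1) (by omega),
            show m + 1 + (j - i) = m + (j - i) + 1 by omega]
          exact hadj _ (by omega)
      have hstat' : ∀ m, 1 ≤ m → m < n' →
          (D.ColliderAt q m → ∃ d, D.Desc (q m) d ∧ d ∈ W) ∧
          (¬ D.ColliderAt q m → q m ∉ W) := by
        intro m hm1 hm2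
        rcases lt_trichotomy m i with hlt | heq | hgt
        · have hcol : D.ColliderAt q m ↔ D.ColliderAt p m :=
            bd_colliderAt_iff (hq1 _ (by omega)) (hq1 _ (by omega)) (hq1 _ (by omega))
          rw [hcol, hq1 m (by omega)]
          exact hstat m hm1 (by omega)
        · subst heq
          have e1 : q (m - 1) = p (m - 1) := hq1 _ (by omega)
          have e2 : q m = p m := hq1 _ le_rfl
          have e3 : q (m + 1) = p (j + 1) := by
            rw [hq2 (m + 1) (by omega)]
            congr 1
            omega
          have hcolq : D.ColliderAt q m ↔
              (D.IntoE (p (m - 1)) (p m) ∧ D.IntoE (p (j + 1)) (p m)) := by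
            unfold CondAdj.MG.ColliderAt
            rw [e1, e2, e3]
          have hadjj : D.Adj (p (j - 1)) (p j) := by
            have h := hadj (j - 1) (by omega)
            rwa [show j - 1 + 1 = j by omega] at h
          constructor
          · intro hc
            rw [hcolq] at hc
            obtain ⟨hL, hR⟩ := hc
            rw [e2]
            by_cases hci : D.ColliderAt p m
            · exact (hstat m hm1 (by omega)).1 hci
            · by_cases hcj : D.ColliderAt p j
              · obtain ⟨d, hd1, hd2⟩ := (hstat j (by omega) (by omega)).1 hcj
                exact ⟨d, by rw [hpij]; exact hd1, hd2⟩
              · -- both occurrences are non-colliders: find a collider in between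
                have hnotR : ¬ D.IntoE (p (m + 1)) (p m) := fun h => hci ⟨hL, h⟩
                have hfw : D.DirE (p m) (p (m + 1)) :=
                  bd_dirE_of_not_intoE hD (bd_adj_symm (hadj m (by omega))) hnotR
                have hnotL : ¬ D.IntoE (p (j - 1)) (p j) := fun h =>
                  hcj ⟨h, by rw [← hpij]; exact hR⟩
                have hbw : D.DirE (p j) (p (j - 1)) :=
                  bd_dirE_of_not_intoE hD hadjj hnotL
                have hEx : ∃ s, ¬ D.IntoE (p (m + s)) (p (m + s + 1)) := by
                  refine ⟨j - 1 - m, ?_⟩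
                  rw [show m + (j - 1 - m) = j - 1 by omega,
                    show j - 1 + 1 = j by omega]
                  exact bd_not_intoE_of_dirE hbw
                set t0 := Nat.find hEx with ht0def
                have ht0 : ¬ D.IntoE (p (m + t0)) (p (m + t0 + 1)) := Nat.find_spec hEx
                have hmin : ∀ s < t0, D.IntoE (p (m + s)) (p (m + s + 1)) :=
                  fun s hs => not_not.mp (Nat.find_min hEx hs)
                have ht0le : t0 ≤ j - 1 - m := Nat.find_min' hEx (by
                  rw [show m + (j - 1 - m) = j - 1 by omega,
                    show j - 1 + 1 = j by omega]
                  exact bd_not_intoE_of_dirE hbw)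
                have ht0pos : 1 ≤ t0 := by
                  rcases Nat.eq_zero_or_pos t0 with h | h
                  · rw [h] at ht0
                    exact absurd hfw.1 (by simpa [CondAdj.MG.IntoE] using ht0)
                  · exact h
                set m0 := m + t0 with hm0def
                have hdirsteps : ∀ s < t0, D.DirE (p (m + s)) (p (m + s + 1)) := by
                  intro s hs
                  exact bd_dirE_of_intoE hD (hadj (m + s) (by omega)) (hmin s hs)
                have hdesc0 : D.Desc (p m) (p m0) := by
                  have := bd_desc_chain (e := fun s => p (m + s)) (t := t0)
                    (fun s hs => by
                      simpa [show m + s + 1 = m + (s + 1) by omega] using hdirsteps s hs)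
                  simpa using this t0 le_rfl
                have hcolm0 : D.ColliderAt p m0 := by
                  constructor
                  · have := hmin (t0 - 1) (by omega)
                    rwa [show m + (t0 - 1) = m0 - 1 by omega,
                      show m0 - 1 + 1 = m0 by omega] at this
                  · exact (bd_dirE_of_not_intoE hD (hadj m0 (by omega)) ht0).1
                obtain ⟨d, hd1, hd2⟩ := (hstat m0 (by omega) (by omega)).1 hcolm0
                exact ⟨d, hdesc0.trans hd1, hd2⟩
          · intro hc
            rw [hcolq] at hc
            rw [e2]
            by_cases hci : D.ColliderAt p m
            · have hnR : ¬ D.IntoE (p (j + 1)) (p m) := fun h => hc ⟨hci.1, h⟩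
              have hcj : ¬ D.ColliderAt p j := fun h => hnR (by rw [hpij]; exact h.2)
              have hres := (hstat j (by omega) (by omega)).2 hcj
              rw [← hpij] at hres
              exact hres
            · exact (hstat m hm1 (by omega)).2 hci
        · have e1 : q (m - 1) = p (m - 1 + (j - i)) := hq2 _ (by omega)
          have e2 : q m = p (m + (j - i)) := hq2 _ (by omega)
          have e3 : q (m + 1) = p (m + 1 + (j - i)) := hq2 _ (by omega)
          have hcol : D.ColliderAt q m ↔ D.ColliderAt p (m + (j - i)) :=
            bd_colliderAt_iff
              (by rw [e1]; congr 1; omega) e2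
              (by rw [e3]; congr 1; omega)
          rw [e2, hcol]
          exact hstat _ (by omega) (by omega)
      refine IH n' (by omega) q ⟨by omega, hadj', by rw [hq1 0 (by omega)]; exact h0,
        ?_, ?_, ?_, hstat'⟩
      · rw [hq2 n' (by omega), show n' + (j - i) = n by omega]
        exact hY
      · intro m h1 h2
        rcases le_or_gt m i with h | h
        · rw [hq1 m h]
          exact hprop m h1 (by omega)
        · rw [hq2 m (by omega)]
          exact hprop _ (by omega) (by omega)
      · rw [hq1 0 (by omega), hq1 1 (by omega)]
        exact hbd

end BDAux

/-- comparison of back-door criteria: for pairwise disjoint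
node sets `X, Y, Z, S` in a DAG `D` with `Z ∩ De(X, D) = ∅`, `S` satisfies the
conditional back-door criterion relative to `(X, Y, Z)` iff `S ∪ Z` satisfies
the generalized back-door criterion relative to `(X, Y)`. -/
theorem condBackdoor_iff_generalizedBackdoor
    {V : Type} (D : CondAdj.MG V) (hD : D.IsDAG)
    (X Y Z S : Set V)
    (hXY : Disjoint X Y) (hXZ : Disjoint X Z) (hXS : Disjoint X S)
    (hYZ : Disjoint Y Z) (hYS : Disjoint Y S) (hZS : Disjoint Z S)
    (hZ : Z ∩ D.De X = ∅) :
    (S ∩ D.De X = ∅ ∧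
        ∀ p n, D.IsPathFromTo p n X Y → CondAdj.Proper p n X →
          ¬ D.DirE (p 0) (p 1) → D.Blocks (S ∪ Z) p n) ↔
      ((S ∪ Z) ∩ D.De X = ∅ ∧
        ∀ x ∈ X, ∀ p n, D.IsPathFromTo p n {x} Y → ¬ D.DirE (p 0) (p 1) →
          D.Blocks ((S ∪ Z ∪ X) \ {x}) p n) := by
  classical
  constructor
  · rintro ⟨hS, hB⟩
    constructor
    · rw [Set.union_inter_distrib_right, hS, hZ, Set.union_empty]
    · intro x hx p n hpt hbd
      by_contra hnb
      obtain ⟨⟨hn1, hinj, hadj⟩, h0x, hnY⟩ := hpt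
      have h0 : p 0 = x := h0x
      have hU : ∀ i, 1 ≤ i → i < n →
          (¬ D.ColliderAt p i → p i ∉ ((S ∪ Z ∪ X) \ {x})) ∧
          (D.ColliderAt p i → ∃ d, D.Desc (p i) d ∧ d ∈ ((S ∪ Z ∪ X) \ {x})) := by
        intro i h1 h2
        constructor
        · intro hnc hm
          exact hnb ⟨i, h1, h2, Or.inl ⟨hnc, hm⟩⟩
        · intro hc
          by_contra hno
          push_neg at hno
          exact hnb ⟨i, h1, h2, Or.inr ⟨hc, fun d hd => hno d hd⟩⟩
      have hxp0ne : ∀ m, 1 ≤ m → m ≤ n → p m ≠ x := by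
        intro m h1 h2 he
        have := hinj m h2 0 (Nat.zero_le n) (he.trans h0.symm)
        omega
      set k := Nat.findGreatest (fun i => p i ∈ X) n with hkdef
      have hp0X : (fun i => p i ∈ X) 0 := by
        simp only []
        rw [h0]
        exact hx
      have hkX : p k ∈ X := by
        rw [hkdef]
        exact Nat.findGreatest_spec (P := fun i => p i ∈ X) (Nat.zero_le n) hp0X
      have hkmax : ∀ m, k < m → m ≤ n → p m ∉ X := by
        rw [hkdef]
        exact fun m h1 h2 =>
          Nat.findGreatest_is_greatest (P := fun i => p i ∈ X) h1 h2
      have hkn : k ≤ n := by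
        rw [hkdef]
        exact Nat.findGreatest_le n
      have hkltn : k < n := by
        rcases eq_or_lt_of_le hkn with heq | h
        · rw [heq] at hkX
          exact absurd hnY (Set.disjoint_left.mp hXY hkX)
        · exact h
      -- a "bad" collider: one whose only relevant descendants are in X
      set bad : ℕ → Prop := fun i => k < i ∧ i < n ∧ D.ColliderAt p i ∧
        (∀ d, D.Desc (p i) d → d ∉ S ∪ Z) ∧ ∃ x', x' ∈ X ∧ D.Desc (p i) x'
        with hbaddef
      have hColW : ∀ m, k < m → m < n → D.ColliderAt p m → ¬ bad m →
          ∃ d, D.Desc (p m) d ∧ d ∈ S ∪ Z := by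
        intro m hkm hmn hc hnb'
        by_cases hdW : ∃ d, D.Desc (p m) d ∧ d ∈ S ∪ Z
        · exact hdW
        · exfalso
          push_neg at hdW
          obtain ⟨d, hd1, hd2⟩ := (hU m (by omega) hmn).2 hc
          obtain ⟨hm2, hne⟩ := hd2
          rcases hm2 with hm2 | hm2
          · exact hdW d hd1 hm2
          · exact hnb' ⟨hkm, hmn, hc, hdW, d, hm2, hd1⟩
      have hnotinW : ∀ m, 1 ≤ m → m < n → ¬ D.ColliderAt p m → p m ∉ S ∪ Z := by
        intro m h1 h2 hnc hmem
        refine (hU m h1 h2).1 hnc ⟨Or.inl hmem, ?_⟩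
        simp only [Set.mem_singleton_iff]
        exact hxp0ne m h1 (by omega)
      -- the subwalk of p from k is a proper back-door walk; handle its bad colliders
      by_cases hbadex : ∃ i, bad i
      · -- re-root at the X-descendant of the last bad collider
        obtain ⟨i0, hbi0⟩ := hbadex
        set i' := Nat.findGreatest bad (n - 1) with hi'def
        have hi0n : i0 ≤ n - 1 := by
          have := hbi0.2.1
          omega
        have hbadi : bad i' := by
          rw [hi'def]
          exact Nat.findGreatest_spec (P := bad) hi0n hbi0
        have hmaxbad : ∀ m, i' < m → m ≤ n - 1 → ¬ bad m := by
          rw [hi'def]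
          exact fun m h1 h2 => Nat.findGreatest_is_greatest (P := bad) h1 h2
        obtain ⟨hki, hin, hcoli, hnod, x', hx'X, hdescx'⟩ := hbadi
        have hcnotX : p i' ∉ X := hkmax i' hki (by omega)
        obtain ⟨e, t, ht1, he0, het, hsteps, hnotX⟩ :=
          bd_exists_dirPath_firstHit hdescx' hx'X hcnotX
        have hdescE : ∀ s, s ≤ t → D.Desc (p i') (e s) := by
          have := bd_desc_chain hsteps
          rwa [he0] at this
        set N := t + (n - i') with hNdef
        set r : ℕ → V := fun m => if m ≤ t then e (t - m) else p (i' + (m - t))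
          with hrdef
        have hr1 : ∀ m, m ≤ t → r m = e (t - m) := fun m hm => if_pos hm
        have hr2 : ∀ m, t ≤ m → r m = p (i' + (m - t)) := by
          intro m hm
          rcases eq_or_lt_of_le hm with heq | h
          · subst heq
            rw [hr1 t le_rfl]
            simp [he0]
          · exact if_neg (by omega)
        have hwalk : BDOpenWalk D (S ∪ Z) X Y r N := by
          refine ⟨by omega, ?_, ?_, ?_, ?_, ?_, ?_⟩
          · -- adjacency
            intro m hm
            rcases lt_or_ge m t with h | h
            · rw [hr1 m (by omega), hr1 (m + 1) (by omega)]
              have hs := hsteps (t - m - 1) (by omega)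
              rw [show t - m - 1 + 1 = t - m by omega] at hs
              have := bd_adj_of_dirE hs
              rw [show t - (m + 1) = t - m - 1 by omega]
              exact bd_adj_symm this
            · rw [hr2 m h, hr2 (m + 1) (by omega),
                show i' + (m + 1 - t) = i' + (m - t) + 1 by omega]
              exact hadj _ (by omega)
          · rw [hr1 0 (by omega)]
            simpa using het
          · rw [hr2 N (by omega), show i' + (N - t) = n by omega]
            exact hnY
          · -- proper
            intro m h1 h2
            rcases le_or_gt m t with h | h
            · rw [hr1 m h]
              exact hnotX (t - m) (by omega)
            · rw [hr2 m (by omega)]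
              exact hkmax _ (by omega) (by omega)
          · -- back-door
            rw [hr1 0 (by omega), hr1 1 (by omega)]
            have hs := hsteps (t - 1) (by omega)
            rw [show t - 1 + 1 = t by omega] at hs
            rw [show t - 0 = t by omega]
            exact bd_not_dirE_rev hs
          · -- statuses
            intro m h1 h2
            rcases lt_trichotomy m t with hlt | heq | hgt
            · have e1 : r (m - 1) = e (t - m + 1) := by
                rw [hr1 _ (by omega)]
                congr 1
                omega
              have e2 : r m = e (t - m) := hr1 _ (by omega)
              have e3 : r (m + 1) = e (t - m - 1) := hr1 _ (by omega)
              have hs := hsteps (t - m) (by omega)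
              have hnc : ¬ D.ColliderAt r m := by
                intro hcol
                have := hcol.1
                rw [e1, e2] at this
                exact bd_not_intoE_of_dirE hs this
              exact ⟨fun hcol => absurd hcol hnc,
                fun _ => by rw [e2]; exact hnod _ (hdescE _ (by omega))⟩
            · subst heq
              have e1 : r (m - 1) = e 1 := by
                rw [hr1 _ (by omega)]
                congr 1
                omega
              have e2 : r m = e 0 := by
                rw [hr1 _ le_rfl]
                congr 1
                omega
              have hs := hsteps 0 (by omega)
              have hnc : ¬ D.ColliderAt r m := by
                intro hcol
                have := hcol.1
                rw [e1, e2] at this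
                exact bd_not_intoE_of_dirE hs this
              exact ⟨fun hcol => absurd hcol hnc,
                fun _ => by rw [e2, he0]; exact hnod _ Relation.ReflTransGen.refl⟩
            · have e1 : r (m - 1) = p (i' + (m - t) - 1) := by
                rw [hr2 _ (by omega)]
                congr 1
                omega
              have e2 : r m = p (i' + (m - t)) := hr2 _ (by omega)
              have e3 : r (m + 1) = p (i' + (m - t) + 1) := by
                rw [hr2 _ (by omega)]
                congr 1
                omega
              have hcol : D.ColliderAt r m ↔ D.ColliderAt p (i' + (m - t)) :=
                bd_colliderAt_iff e1.symm e2.symm e3.symm |>.symm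
              constructor
              · intro hc
                rw [e2]
                rw [hcol] at hc
                exact hColW _ (by omega) (by omega) hc
                  (hmaxbad _ (by omega) (by omega))
              · intro hc
                rw [e2]
                rw [hcol] at hc
                exact hnotinW _ (by omega) (by omega) hc
        obtain ⟨q, m, hqpt, hqprop, hqbd, hqnbl⟩ :=
          bd_exists_path_of_openWalk hD hXY N r hwalk
        exact hqnbl (hB q m hqpt hqprop hqbd)
      · -- no bad collider: the subwalk of p from k is W-open
        push_neg at hbadex
        set q : ℕ → V := fun m => p (k + m) with hqdef
        have hwalk : BDOpenWalk D (S ∪ Z) X Y q (n - k) := by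
          refine ⟨by omega, ?_, hkX, ?_, ?_, ?_, ?_⟩
          · intro m hm
            exact hadj (k + m) (by omega)
          · show p (k + (n - k)) ∈ Y
            rw [show k + (n - k) = n by omega]
            exact hnY
          · intro m h1 h2
            exact hkmax (k + m) (by omega) (by omega)
          · -- back-door
            show ¬ D.DirE (p (k + 0)) (p (k + 1))
            rcases Nat.eq_zero_or_pos k with hk0 | hkpos
            · rw [hk0]
              exact hbd
            · have hcolk : D.ColliderAt p k := by
                by_contra hnc
                refine (hU k (by omega) (by omega)).1 hnc ⟨Or.inr hkX, ?_⟩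
                simp only [Set.mem_singleton_iff]
                exact hxp0ne k (by omega) (by omega)
              exact bd_not_dirE_of_intoE hcolk.2
          · intro m h1 h2
            have e1 : q (m - 1) = p (k + m - 1) := by
              show p (k + (m - 1)) = p (k + m - 1)
              congr 1
              omega
            have e2 : q m = p (k + m) := rfl
            have e3 : q (m + 1) = p (k + m + 1) := rfl
            have hcol : D.ColliderAt q m ↔ D.ColliderAt p (k + m) :=
              bd_colliderAt_iff e1 e2 e3
            constructor
            · intro hc
              rw [hcol] at hc
              exact hColW _ (by omega) (by omega) hc (hbadex _)
            · intro hc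
              rw [hcol] at hc
              exact hnotinW _ (by omega) (by omega) hc
        obtain ⟨q', m', hqpt, hqprop, hqbd, hqnbl⟩ :=
          bd_exists_path_of_openWalk hD hXY (n - k) q hwalk
        exact hqnbl (hB q' m' hqpt hqprop hqbd)
  · rintro ⟨hSZ, hB⟩
    constructor
    · have hsub : S ∩ D.De X ⊆ (S ∪ Z) ∩ D.De X :=
        Set.inter_subset_inter_left _ Set.subset_union_left
      rw [hSZ] at hsub
      exact Set.subset_eq_empty hsub rfl
    · intro p n hpt hprop hbd
      obtain ⟨hpath, h0X, hnY⟩ := hpt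
      have hbl := hB (p 0) h0X p n ⟨hpath, rfl, hnY⟩ hbd
      obtain ⟨i, h1, h2, hc | hc⟩ := hbl
      · refine ⟨i, h1, h2, Or.inl ⟨hc.1, ?_⟩⟩
        obtain ⟨hm, hne⟩ := hc.2
        rcases hm with hm | hm
        · exact hm
        · exact absurd hm (hprop i h1 (by omega))
      · refine ⟨i, h1, h2, Or.inr ⟨hc.1, fun d hd hdW => ?_⟩⟩
        refine hc.2 d hd ⟨Or.inl hdW, ?_⟩
        simp only [Set.mem_singleton_iff]
        rintro rfl
        rcases hdW with h | h
        · exact Set.disjoint_left.mp hXS h0X h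
        · exact Set.disjoint_left.mp hXZ h0X h
end

section
/- Let p = ⟨P0, …, Pk⟩ be a path in an MPDAG G. Then p is possibly causal (i.e., G contains no edge Pi ← Pj for 0 ≤ i < j ≤ k) if and only if G does not contain any directed path Pi ← … ← Pj for 0 ≤ i < j ≤ k. -/
open MeasureTheory
open scoped ENNReal

namespace CondAdj
namespace MG

/-- Key lemma: in an MPDAG, a "possibly causal" sequence (distinct nodes,
consecutive adjacency, no backward arrowheads among all pairs) cannot be closed
by a directed path from its last node back to its first. -/
lemma key_no_back {V : Type} (G : MG V) (hG : G.IsMPDAG) :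
    ∀ m, 1 ≤ m → ∀ q : ℕ → V,
      (∀ a ≤ m, ∀ b ≤ m, q a = q b → a = b) →
      (∀ a < m, G.Adj (q a) (q (a + 1))) →
      (∀ a b, a < b → b ≤ m → ¬ G.IntoE (q b) (q a)) →
      ¬ Relation.TransGen G.DirE (q m) (q 0) := by
  intro m
  induction m using Nat.strong_induction_on with
  | _ m IH =>
  intro hm q hinj hadj hpc htg
  by_cases hch : ∃ a b, a + 2 ≤ b ∧ b ≤ m ∧ G.Adj (q a) (q b)
  · -- there is a chord: shortcut and use strong induction
    obtain ⟨a, b, hab, hbm, hadjab⟩ := hch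
    have hc1 : 1 ≤ b - a - 1 := by omega
    have hm'1 : a + 1 ≤ m - (b - a - 1) := by omega
    have hm'lt : m - (b - a - 1) < m := by omega
    have hσmono : ∀ {k l : ℕ}, k < l →
        (if k ≤ a then k else k + (b - a - 1)) <
          (if l ≤ a then l else l + (b - a - 1)) := by
      intro k l hkl
      split <;> split <;> omega
    have hσle : ∀ k ≤ m - (b - a - 1),
        (if k ≤ a then k else k + (b - a - 1)) ≤ m := by
      intro k hk; split <;> omega
    refine IH (m - (b - a - 1)) hm'lt (by omega)
      (fun k => q (if k ≤ a then k else k + (b - a - 1))) ?_ ?_ ?_ ?_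
    · intro x hx y hy hxy
      have := hinj _ (hσle x hx) _ (hσle y hy) hxy
      rcases lt_trichotomy x y with h | h | h
      · exact absurd this (by have := hσmono h; omega)
      · exact h
      · exact absurd this (by have := hσmono h; omega)
    · intro k hk
      rcases Nat.lt_trichotomy k a with h | h | h
      · have h1 : (if k ≤ a then k else k + (b - a - 1)) = k := by
          rw [if_pos (by omega)]
        have h2 : (if k + 1 ≤ a then k + 1 else k + 1 + (b - a - 1)) = k + 1 := by
          rw [if_pos (by omega)]
        simp only [h1, h2]
        exact hadj k (by omega)
      · have h1 : (if k ≤ a then k else k + (b - a - 1)) = k := by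
          rw [if_pos (by omega)]
        have h2 : (if k + 1 ≤ a then k + 1 else k + 1 + (b - a - 1)) = b := by
          rw [if_neg (by omega)]; omega
        simp only [h1, h2]
        rw [h]
        exact hadjab
      · have h1 : (if k ≤ a then k else k + (b - a - 1)) = k + (b - a - 1) := by
          rw [if_neg (by omega)]
        have h2 : (if k + 1 ≤ a then k + 1 else k + 1 + (b - a - 1)) =
            k + (b - a - 1) + 1 := by
          rw [if_neg (by omega)]; omega
        simp only [h1, h2]
        exact hadj (k + (b - a - 1)) (by omega)
    · intro x y hxy hy
      exact hpc _ _ (hσmono hxy) (hσle y hy)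
    · have h1 : (if (0 : ℕ) ≤ a then (0 : ℕ) else 0 + (b - a - 1)) = 0 := by
        rw [if_pos (by omega)]
      have h2 : (if m - (b - a - 1) ≤ a then m - (b - a - 1)
          else m - (b - a - 1) + (b - a - 1)) = m := by
        rw [if_neg (by omega)]; omega
      simp only [h1, h2]
      exact htg
  · -- chordless case: use a DAG D in [G] orienting the first edge forward
    push_neg at hch
    obtain ⟨D, hD, hD01⟩ : ∃ D ∈ G.rep, D.DirE (q 0) (q 1) := by
      have hadj01 := hadj 0 (by omega)
      rcases hG.1.1 _ _ hadj01 with h | h | h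
      · obtain ⟨D, hD⟩ := hG.2.1
        exact ⟨D, hD, hD.2.2.1 _ _ h⟩
      · exact absurd h.1 (hpc 0 1 one_pos hm)
      · obtain ⟨⟨D, hD, h'⟩, -⟩ := hG.2.2 _ _ (Or.inl h)
        exact ⟨D, hD, h'⟩
    -- every edge of q is directed forward in D
    have hall : ∀ k < m, D.DirE (q k) (q (k + 1)) := by
      intro k
      induction k with
      | zero => intro _; exact hD01
      | succ k ih =>
        intro hk
        have hDk := ih (by omega)
        have hadjk := hadj (k + 1) hk
        rcases hG.1.1 _ _ hadjk with h | h | h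
        · exact hD.2.2.1 _ _ h
        · exact absurd h.1 (hpc (k + 1) (k + 2) (by omega) (by omega))
        · have hDadj : D.Adj (q (k + 1)) (q (k + 2)) := (hD.2.1 _ _).2 hadjk
          rcases hD.1.1 _ _ hDadj with h' | h'
          · exact h'
          · exfalso
            have hne : q k ≠ q (k + 2) := by
              intro he
              have := hinj k (by omega) (k + 2) (by omega) he
              omega
            have hnadj : ¬ D.Adj (q k) (q (k + 2)) := fun ha =>
              hch k (k + 2) (by omega) (by omega) ((hD.2.1 _ _).1 ha)
            have hcol : D.UnshieldedCollider (q k) (q (k + 1)) (q (k + 2)) :=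
              ⟨hDk, h', hne, hnadj⟩
            have h1 := ((hD.2.2.2 _ _ _).1 hcol).2.1.1
            rw [h.2] at h1
            exact Mark.noConfusion h1
    -- directed path along q in D
    have hDpath : ∀ k, 1 ≤ k → k ≤ m → Relation.TransGen D.DirE (q 0) (q k) := by
      intro k
      induction k with
      | zero => omega
      | succ k ih =>
        intro _ hk
        rcases Nat.eq_zero_or_pos k with h0 | h0
        · subst h0; exact Relation.TransGen.single (hall 0 hk)
        · exact (ih h0 (by omega)).tail (hall k (by omega))
    have hback : Relation.TransGen D.DirE (q m) (q 0) :=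
      Relation.TransGen.mono (fun x y hxy => hD.2.2.1 x y hxy) _ _ htg
    exact hD.1.2 (q 0) ((hDpath m hm le_rfl).trans hback)

end MG
end CondAdj
/-- a path `p = ⟨p 0, …, p n⟩` in an MPDAG `G` is possibly
causal iff `G` contains no directed path from `p j` to `p i` for `i < j ≤ n`. -/
theorem possCausal_iff_no_backward_directed_path
    {V : Type} (G : CondAdj.MG V) (hG : G.IsMPDAG)
    (p : ℕ → V) (n : ℕ) (hp : G.IsPath p n) :
    G.PossCausal p n ↔
      ∀ i j, i < j → j ≤ n → ¬ Relation.TransGen G.DirE (p j) (p i) := by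
  constructor
  · intro hpc i j hij hjn htg
    refine CondAdj.MG.key_no_back G hG (j - i) (by omega) (fun k => p (i + k))
      ?_ ?_ ?_ ?_
    · intro a ha b hb he
      have := hp.2.1 (i + a) (by omega) (i + b) (by omega) he
      omega
    · intro a ha
      exact hp.2.2 (i + a) (by omega)
    · intro a b hab hb hInto
      exact hpc (i + a) (i + b) (by omega) (by omega) hInto
    · have h1 : i + (j - i) = j := by omega
      simpa [h1] using htg
  · intro hno i j hij hjn hInto
    have hm' : G.m (p j) (p i) = CondAdj.Mark.arrow := hInto
    have hAdj : G.Adj (p j) (p i) := by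
      unfold CondAdj.MG.Adj
      rw [hm']
      simp
    rcases hG.1.1 _ _ hAdj with h | h | h
    · exact hno i j hij hjn (Relation.TransGen.single h)
    · rw [h.2] at hm'; exact CondAdj.Mark.noConfusion hm'
    · rw [h.1] at hm'; exact CondAdj.Mark.noConfusion hm'
end
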